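/- arXiv:1408.0201 — 14 statements merged into one kernel-verified Lean document; each statement's English description precedes it below -/
import Mathlib

section
/- Let ρ₋, ρ₊ > 0 and u₋ > u₊ be real numbers, and set σ = (√ρ₋ u₋ + √ρ₊ u₊)/(√ρ₋ + √ρ₊). Then (i) u₊ < σ < u₋ (entropy condition), (ii) √(ρ₋ρ₊)(u₋ − u₊) = σ(ρ₊ − ρ₋) − (ρ₊u₊ − ρ₋u₋), and (iii) σ·√(ρ₋ρ₊)(u₋ − u₊) = σ(ρ₊u₊ − ρ₋u₋) − (ρ₊u₊² − ρ₋u₋²). Consequently the pair x(t) = σt, w(t) = √(ρ₋ρ₊)(u₋ − u₊)t/√(1+σ²) solves the generalized Rankine–Hugoniot relations dx/dt = σ, d(w√(1+σ²))/dt = σ[ρ] − [ρu], d(wσ√(1+σ²))/dt = σ[ρu] − [ρu²] with x(0) = 0, w(0) = 0. -/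
/-- delta-shock solution of the generalized Rankine–Hugoniot
relations for the zero-pressure gas dynamics system. -/
theorem zero_pressure_delta_shock
    (ρm ρp um up : ℝ) (hρm : 0 < ρm) (hρp : 0 < ρp) (hu : up < um)
    (σ : ℝ)
    (hσ : σ = (Real.sqrt ρm * um + Real.sqrt ρp * up) /
      (Real.sqrt ρm + Real.sqrt ρp))
    (x w : ℝ → ℝ) (hx : ∀ t, x t = σ * t)
    (hw : ∀ t, w t = Real.sqrt (ρm * ρp) * (um - up) * t /
      Real.sqrt (1 + σ ^ 2)) :
    (up < σ ∧ σ < um) ∧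
    Real.sqrt (ρm * ρp) * (um - up)
      = σ * (ρp - ρm) - (ρp * up - ρm * um) ∧
    σ * (Real.sqrt (ρm * ρp) * (um - up))
      = σ * (ρp * up - ρm * um) - (ρp * up ^ 2 - ρm * um ^ 2) ∧
    x 0 = 0 ∧ w 0 = 0 ∧
    (∀ t, HasDerivAt x σ t) ∧
    (∀ t, HasDerivAt (fun s => w s * Real.sqrt (1 + σ ^ 2))
      (σ * (ρp - ρm) - (ρp * up - ρm * um)) t) ∧
    (∀ t, HasDerivAt (fun s => w s * σ * Real.sqrt (1 + σ ^ 2))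
      (σ * (ρp * up - ρm * um) - (ρp * up ^ 2 - ρm * um ^ 2)) t) := by
  set a := Real.sqrt ρm with ha
  set b := Real.sqrt ρp with hb
  have ha0 : 0 < a := Real.sqrt_pos.mpr hρm
  have hb0 : 0 < b := Real.sqrt_pos.mpr hρp
  have ha2 : a ^ 2 = ρm := Real.sq_sqrt hρm.le
  have hb2 : b ^ 2 = ρp := Real.sq_sqrt hρp.le
  have hab : Real.sqrt (ρm * ρp) = a * b := Real.sqrt_mul hρm.le ρp
  have hsum : 0 < a + b := by linarith
  have hent1 : up < σ := by
    rw [hσ, lt_div_iff₀ hsum]; nlinarith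
  have hent2 : σ < um := by
    rw [hσ, div_lt_iff₀ hsum]; nlinarith
  have hid1 : Real.sqrt (ρm * ρp) * (um - up)
      = σ * (ρp - ρm) - (ρp * up - ρm * um) := by
    rw [hab, hσ, ← ha2, ← hb2]
    field_simp
    ring
  have hid2 : σ * (Real.sqrt (ρm * ρp) * (um - up))
      = σ * (ρp * up - ρm * um) - (ρp * up ^ 2 - ρm * um ^ 2) := by
    rw [hab, hσ, ← ha2, ← hb2]
    field_simp
    ring
  have hK : 0 < Real.sqrt (1 + σ ^ 2) := Real.sqrt_pos.mpr (by positivity)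
  have hwmul : ∀ s, w s * Real.sqrt (1 + σ ^ 2)
      = Real.sqrt (ρm * ρp) * (um - up) * s := by
    intro s; rw [hw]; field_simp
  refine ⟨⟨hent1, hent2⟩, hid1, hid2, by simp [hx], by simp [hw], ?_, ?_, ?_⟩
  · intro t
    have : HasDerivAt (fun s : ℝ => σ * s) (σ * 1) t := (hasDerivAt_id t).const_mul σ
    simpa [funext hx, mul_one] using this
  · intro t
    have : HasDerivAt (fun s : ℝ => Real.sqrt (ρm * ρp) * (um - up) * s)
        (Real.sqrt (ρm * ρp) * (um - up) * 1) t :=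
      (hasDerivAt_id t).const_mul _
    rw [mul_one, hid1] at this
    exact this.congr_of_eventuallyEq (Filter.Eventually.of_forall fun s => by
      show w s * Real.sqrt (1 + σ ^ 2) = _
      linear_combination hwmul s + s * hid1)
  · intro t
    have : HasDerivAt (fun s : ℝ => σ * (Real.sqrt (ρm * ρp) * (um - up)) * s)
        (σ * (Real.sqrt (ρm * ρp) * (um - up)) * 1) t :=
      (hasDerivAt_id t).const_mul _
    rw [mul_one, hid2] at this
    exact this.congr_of_eventuallyEq (Filter.Eventually.of_forall fun s => by
      show w s * σ * Real.sqrt (1 + σ ^ 2) = _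
      linear_combination σ * hwmul s + s * hid2)
end

section
/- Let ε₁ > 0, let ρ₋, ρ₊ satisfy ρ₋, ρ₊ > ε₁ and ρ₋ ≠ ρ₊, and let u₋ > u₊. Define σ^{ε₁} = ( [(ρ₊−ε₁)u₊ − (ρ₋−ε₁)u₋] + √((ρ₋−ε₁)(ρ₊−ε₁))·(u₋ − u₊) ) / (ρ₊ − ρ₋). Then (i) σ^{ε₁} is a root of the quadratic equation (ρ₊−ρ₋)σ² − 2((ρ₊−ε₁)u₊ − (ρ₋−ε₁)u₋)σ + ((ρ₊−ε₁)u₊² − (ρ₋−ε₁)u₋²) = 0; (ii) σ^{ε₁} = (√(ρ₋−ε₁) u₋ + √(ρ₊−ε₁) u₊)/(√(ρ₋−ε₁) + √(ρ₊−ε₁)); and (iii) u₊ < σ^{ε₁} < u₋. -/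
/-- the delta-shock speed of the flux-perturbed pressureless
system: quadratic equation, closed form, and entropy condition. -/
theorem flux_perturbed_delta_shock_speed
    (ε₁ ρm ρp um up : ℝ) (hε : 0 < ε₁) (hρm : ε₁ < ρm) (hρp : ε₁ < ρp)
    (hne : ρm ≠ ρp) (hu : up < um) (σ : ℝ)
    (hσ : σ = (((ρp - ε₁) * up - (ρm - ε₁) * um) +
      Real.sqrt ((ρm - ε₁) * (ρp - ε₁)) * (um - up)) / (ρp - ρm)) :
    (ρp - ρm) * σ ^ 2 - 2 * ((ρp - ε₁) * up - (ρm - ε₁) * um) * σ +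
      ((ρp - ε₁) * up ^ 2 - (ρm - ε₁) * um ^ 2) = 0 ∧
    σ = (Real.sqrt (ρm - ε₁) * um + Real.sqrt (ρp - ε₁) * up) /
      (Real.sqrt (ρm - ε₁) + Real.sqrt (ρp - ε₁)) ∧
    up < σ ∧ σ < um := by
  set a := Real.sqrt (ρm - ε₁) with ha
  set b := Real.sqrt (ρp - ε₁) with hb
  have hm : (0:ℝ) < ρm - ε₁ := by linarith
  have hp : (0:ℝ) < ρp - ε₁ := by linarith
  have ha0 : 0 < a := Real.sqrt_pos.mpr hm
  have hb0 : 0 < b := Real.sqrt_pos.mpr hp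
  have ha2 : a ^ 2 = ρm - ε₁ := Real.sq_sqrt hm.le
  have hb2 : b ^ 2 = ρp - ε₁ := Real.sq_sqrt hp.le
  have hab : Real.sqrt ((ρm - ε₁) * (ρp - ε₁)) = a * b :=
    Real.sqrt_mul hm.le _
  have hdiff : ρp - ρm = (b - a) * (b + a) := by
    have : ρp - ρm = b ^ 2 - a ^ 2 := by rw [ha2, hb2]; ring
    rw [this]; ring
  have hba : b - a ≠ 0 := by
    intro h
    apply hne
    have : b = a := by linarith
    have := congrArg (· ^ 2) this
    simp only [ha2, hb2] at this
    linarith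
  have hsum : (0:ℝ) < a + b := by linarith
  -- closed form
  have hclosed : σ = (a * um + b * up) / (a + b) := by
    have hρm' : ρm = a ^ 2 + ε₁ := by rw [ha2]; ring
    have hρp' : ρp = b ^ 2 + ε₁ := by rw [hb2]; ring
    rw [hσ, hab, hρm', hρp']
    rw [div_eq_div_iff (by rw [← hρm', ← hρp']; exact sub_ne_zero.mpr (Ne.symm hne)) hsum.ne']
    ring
  refine ⟨?_, by rw [hclosed], ?_, ?_⟩
  · have hρm' : ρm = a ^ 2 + ε₁ := by rw [ha2]; ring
    have hρp' : ρp = b ^ 2 + ε₁ := by rw [hb2]; ring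
    rw [hclosed, hρm', hρp']
    field_simp
    ring
  · rw [hclosed, lt_div_iff₀ hsum]
    nlinarith
  · rw [hclosed, div_lt_iff₀ hsum]
    nlinarith
end

section
/- Let ε₁ > 0, ρ₋, ρ₊ > ε₁ with ρ₋ ≠ ρ₊, u₋ > u₊, and let σ^{ε₁} = (√(ρ₋−ε₁) u₋ + √(ρ₊−ε₁) u₊)/(√(ρ₋−ε₁) + √(ρ₊−ε₁)). Set c^{ε₁} = ε₁(u₊ − u₋) + √((ρ₋−ε₁)(ρ₊−ε₁))(u₋ − u₊). Then (i) c^{ε₁} = σ^{ε₁}(ρ₊ − ρ₋) − ((ρ₊ − 2ε₁)u₊ − (ρ₋ − 2ε₁)u₋), and (ii) σ^{ε₁}·c^{ε₁} = σ^{ε₁}(ρ₊u₊ − ρ₋u₋) − ((ρ₊ − ε₁)u₊² − (ρ₋ − ε₁)u₋²). Consequently x(t) = σ^{ε₁}t and w^{ε₁}(t) = c^{ε₁}t/√(1+(σ^{ε₁})²) solve the generalized Rankine–Hugoniot relations of the flux-perturbed pressureless system with x(0)=0, w^{ε₁}(0)=0. -/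
/-- the pair (x(t), w^ε₁(t)) solves the generalized
Rankine–Hugoniot relations of the flux-perturbed pressureless system. -/
theorem flux_perturbed_delta_shock_solves_GRH
    (ε₁ ρm ρp um up : ℝ) (hε : 0 < ε₁) (hρm : ε₁ < ρm) (hρp : ε₁ < ρp)
    (hne : ρm ≠ ρp) (hu : up < um) (σ c : ℝ)
    (hσ : σ = (Real.sqrt (ρm - ε₁) * um + Real.sqrt (ρp - ε₁) * up) /
      (Real.sqrt (ρm - ε₁) + Real.sqrt (ρp - ε₁)))
    (hc : c = ε₁ * (up - um) + Real.sqrt ((ρm - ε₁) * (ρp - ε₁)) * (um - up))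
    (x w : ℝ → ℝ) (hx : ∀ t, x t = σ * t)
    (hw : ∀ t, w t = c * t / Real.sqrt (1 + σ ^ 2)) :
    c = σ * (ρp - ρm) - ((ρp - 2 * ε₁) * up - (ρm - 2 * ε₁) * um) ∧
    σ * c = σ * (ρp * up - ρm * um) -
      ((ρp - ε₁) * up ^ 2 - (ρm - ε₁) * um ^ 2) ∧
    x 0 = 0 ∧ w 0 = 0 ∧
    (∀ t, HasDerivAt x σ t) ∧
    (∀ t, HasDerivAt (fun s => w s * Real.sqrt (1 + σ ^ 2))
      (σ * (ρp - ρm) - ((ρp - 2 * ε₁) * up - (ρm - 2 * ε₁) * um)) t) ∧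
    (∀ t, HasDerivAt (fun s => w s * σ * Real.sqrt (1 + σ ^ 2))
      (σ * (ρp * up - ρm * um) -
        ((ρp - ε₁) * up ^ 2 - (ρm - ε₁) * um ^ 2)) t) := by
  have ha0 : 0 < Real.sqrt (ρm - ε₁) := Real.sqrt_pos.2 (by linarith)
  have hb0 : 0 < Real.sqrt (ρp - ε₁) := Real.sqrt_pos.2 (by linarith)
  set a := Real.sqrt (ρm - ε₁)
  set b := Real.sqrt (ρp - ε₁)
  have ha2 : a ^ 2 = ρm - ε₁ := Real.sq_sqrt (by linarith)
  have hb2 : b ^ 2 = ρp - ε₁ := Real.sq_sqrt (by linarith)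
  have hab : Real.sqrt ((ρm - ε₁) * (ρp - ε₁)) = a * b :=
    Real.sqrt_mul (by linarith) _
  have hc' : c = ε₁ * (up - um) + a * b * (um - up) := by rw [hc, hab]
  have habne : a + b ≠ 0 := by positivity
  have hσ' : σ * (a + b) = a * um + b * up := by
    rw [hσ]; field_simp
  have h1 : c = σ * (ρp - ρm) - ((ρp - 2 * ε₁) * up - (ρm - 2 * ε₁) * um) := by
    linear_combination hc' + (a - b) * hσ' + (um - σ) * ha2 + (σ - up) * hb2
  have h2 : σ * c = σ * (ρp * up - ρm * um) -
      ((ρp - ε₁) * up ^ 2 - (ρm - ε₁) * um ^ 2) := by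
    linear_combination σ * hc' + (a * um - b * up) * hσ' +
      (um ^ 2 - σ * um) * ha2 + (σ * up - up ^ 2) * hb2
  have hs : (0:ℝ) < Real.sqrt (1 + σ ^ 2) := Real.sqrt_pos.2 (by positivity)
  have hxfun : x = fun s => σ * s := funext hx
  refine ⟨h1, h2, by rw [hx]; ring, by rw [hw]; ring, ?_, ?_, ?_⟩
  · intro t
    rw [hxfun]
    simpa using (hasDerivAt_id t).const_mul σ
  · intro t
    have heq : (fun s => w s * Real.sqrt (1 + σ ^ 2)) = fun s => c * s := by
      funext s; rw [hw]; field_simp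
    rw [heq, ← h1]
    simpa using (hasDerivAt_id t).const_mul c
  · intro t
    have heq : (fun s => w s * σ * Real.sqrt (1 + σ ^ 2)) = fun s => σ * c * s := by
      funext s; rw [hw]; field_simp
    rw [heq, ← h2]
    simpa using (hasDerivAt_id t).const_mul (σ * c)
end

section
/- Let ρ₋, ρ₊ > 0 with ρ₋ ≠ ρ₊ and u₋ > u₊. For 0 < ε₁ < min(ρ₋,ρ₊), define σ^{ε₁} = (√(ρ₋−ε₁) u₋ + √(ρ₊−ε₁) u₊)/(√(ρ₋−ε₁) + √(ρ₊−ε₁)) and, for t ≥ 0, w^{ε₁}(t) = (ε₁(u₊−u₋) + √((ρ₋−ε₁)(ρ₊−ε₁))(u₋−u₊)) t / √(1+(σ^{ε₁})²). Then, as ε₁ → 0⁺, σ^{ε₁} converges to σ = (√ρ₋ u₋ + √ρ₊ u₊)/(√ρ₋ + √ρ₊) and, for every t ≥ 0, w^{ε₁}(t) converges to w(t) = √(ρ₋ρ₊)(u₋−u₊) t / √(1+σ²). -/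
/-- as ε₁ → 0⁺ the delta-shock speed and weight of the
flux-perturbed pressureless system converge to those of the zero-pressure
gas dynamics system. -/
theorem flux_perturbed_delta_shock_limit
    (ρm ρp um up : ℝ) (hρm : 0 < ρm) (hρp : 0 < ρp) (hne : ρm ≠ ρp)
    (hu : up < um)
    (σε : ℝ → ℝ) (wε : ℝ → ℝ → ℝ) (σ : ℝ) (w : ℝ → ℝ)
    (hσε : ∀ ε₁, 0 < ε₁ → ε₁ < min ρm ρp →
      σε ε₁ = (Real.sqrt (ρm - ε₁) * um + Real.sqrt (ρp - ε₁) * up) /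
        (Real.sqrt (ρm - ε₁) + Real.sqrt (ρp - ε₁)))
    (hwε : ∀ ε₁, 0 < ε₁ → ε₁ < min ρm ρp → ∀ t, 0 ≤ t →
      wε ε₁ t = (ε₁ * (up - um) +
        Real.sqrt ((ρm - ε₁) * (ρp - ε₁)) * (um - up)) * t /
        Real.sqrt (1 + (σε ε₁) ^ 2))
    (hσ : σ = (Real.sqrt ρm * um + Real.sqrt ρp * up) /
      (Real.sqrt ρm + Real.sqrt ρp))
    (hw : ∀ t, w t = Real.sqrt (ρm * ρp) * (um - up) * t /
      Real.sqrt (1 + σ ^ 2)) :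
    Filter.Tendsto σε (nhdsWithin 0 (Set.Ioo 0 (min ρm ρp))) (nhds σ) ∧
    ∀ t, 0 ≤ t →
      Filter.Tendsto (fun ε₁ => wε ε₁ t)
        (nhdsWithin 0 (Set.Ioo 0 (min ρm ρp))) (nhds (w t)) := by
  set F : ℝ → ℝ := fun ε => (Real.sqrt (ρm - ε) * um + Real.sqrt (ρp - ε) * up) /
        (Real.sqrt (ρm - ε) + Real.sqrt (ρp - ε)) with hFdef
  have hden0 : Real.sqrt (ρm - 0) + Real.sqrt (ρp - 0) ≠ 0 := by
    have : 0 < Real.sqrt (ρm - 0) := Real.sqrt_pos.mpr (by linarith)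
    have h2 : 0 ≤ Real.sqrt (ρp - 0) := Real.sqrt_nonneg _
    linarith
  have hFcont : ContinuousAt F 0 := by
    apply ContinuousAt.div
    · fun_prop
    · fun_prop
    · exact hden0
  have hF0 : F 0 = σ := by simp [hFdef, hσ]
  have hFT : Filter.Tendsto F (nhdsWithin 0 (Set.Ioo 0 (min ρm ρp))) (nhds σ) := by
    have := hFcont.continuousWithinAt (s := Set.Ioo 0 (min ρm ρp))
    rwa [ContinuousWithinAt, hF0] at this
  have hEq : F =ᶠ[nhdsWithin 0 (Set.Ioo 0 (min ρm ρp))] σε := by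
    filter_upwards [self_mem_nhdsWithin] with ε hε
    exact (hσε ε hε.1 hε.2).symm
  constructor
  · exact hFT.congr' hEq
  · intro t ht
    set G : ℝ → ℝ := fun ε => (ε * (up - um) +
        Real.sqrt ((ρm - ε) * (ρp - ε)) * (um - up)) * t /
        Real.sqrt (1 + (F ε) ^ 2) with hGdef
    have hGden : Real.sqrt (1 + (F 0) ^ 2) ≠ 0 := by
      have : (0:ℝ) < 1 + (F 0) ^ 2 := by positivity
      exact (Real.sqrt_pos.mpr this).ne'
    have hGcont : ContinuousAt G 0 := by
      apply ContinuousAt.div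
      · fun_prop
      · exact (Real.continuous_sqrt.continuousAt).comp
          (by exact (continuousAt_const.add (hFcont.pow 2)))
      · exact hGden
    have hG0 : G 0 = w t := by
      simp [hGdef, hF0, hw t, Real.sqrt_mul hρm.le]
    have hGT : Filter.Tendsto G (nhdsWithin 0 (Set.Ioo 0 (min ρm ρp))) (nhds (w t)) := by
      have := hGcont.continuousWithinAt (s := Set.Ioo 0 (min ρm ρp))
      rwa [ContinuousWithinAt, hG0] at this
    have hEq2 : G =ᶠ[nhdsWithin 0 (Set.Ioo 0 (min ρm ρp))] fun ε => wε ε t := by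
      filter_upwards [self_mem_nhdsWithin] with ε hε
      rw [hwε ε hε.1 hε.2 t ht, hσε ε hε.1 hε.2]
    exact hGT.congr' hEq2
end

section
/- Let ε₁, ε₂ > 0, γ > 1, ρ > 2ε₁ and u ∈ ℝ. Define λ₁(ρ,u) = u − √(ε₂ρ^{γ−2}(ρ − 2ε₁)), λ₂(ρ,u) = u + √(ε₂ρ^{γ−2}(ρ − 2ε₁)), r₁ = (1, −√(ε₂ρ^{γ−2}/(ρ − 2ε₁))), r₂ = (1, √(ε₂ρ^{γ−2}/(ρ − 2ε₁))). Then ∇λ₁(ρ,u)·r₁ ≠ 0 and ∇λ₂(ρ,u)·r₂ ≠ 0, where ∇λ = (∂λ/∂ρ, ∂λ/∂u); that is, both characteristic fields are genuinely nonlinear on the region ρ > 2ε₁. -/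
/-- both characteristic fields of the flux-perturbed isentropic
Euler system are genuinely nonlinear on ρ > 2ε₁: the gradients of the
eigenvalues paired with the corresponding right eigenvectors do not vanish. -/
theorem flux_perturbed_genuinely_nonlinear
    (ε₁ ε₂ γ ρ u : ℝ) (hε₁ : 0 < ε₁) (hε₂ : 0 < ε₂) (hγ : 1 < γ)
    (hρ : 2 * ε₁ < ρ)
    (lam1 lam2 : ℝ × ℝ → ℝ)
    (hl1 : ∀ p : ℝ × ℝ,
      lam1 p = p.2 - Real.sqrt (ε₂ * p.1 ^ (γ - 2) * (p.1 - 2 * ε₁)))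
    (hl2 : ∀ p : ℝ × ℝ,
      lam2 p = p.2 + Real.sqrt (ε₂ * p.1 ^ (γ - 2) * (p.1 - 2 * ε₁)))
    (r1 r2 : ℝ × ℝ)
    (hr1 : r1 = (1, -Real.sqrt (ε₂ * ρ ^ (γ - 2) / (ρ - 2 * ε₁))))
    (hr2 : r2 = (1, Real.sqrt (ε₂ * ρ ^ (γ - 2) / (ρ - 2 * ε₁)))) :
    (∃ d : ℝ × ℝ →L[ℝ] ℝ, HasFDerivAt lam1 d (ρ, u) ∧ d r1 ≠ 0) ∧
    (∃ d : ℝ × ℝ →L[ℝ] ℝ, HasFDerivAt lam2 d (ρ, u) ∧ d r2 ≠ 0) := by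
  have hρ0 : (0:ℝ) < ρ := lt_trans (by linarith) hρ
  have hsub : (0:ℝ) < ρ - 2 * ε₁ := by linarith
  have hrp : (0:ℝ) < ρ ^ (γ - 2) := Real.rpow_pos_of_pos hρ0 _
  set G : ℝ → ℝ := fun x => ε₂ * x ^ (γ - 2) * (x - 2 * ε₁) with hG
  have hGpos : 0 < G ρ := by
    simp only [hG]; positivity
  have hc : HasDerivAt (fun x : ℝ => ε₂ * x ^ (γ - 2))
      (ε₂ * ((γ - 2) * ρ ^ (γ - 2 - 1))) ρ :=
    (Real.hasDerivAt_rpow_const (Or.inl hρ0.ne')).const_mul ε₂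
  have hd : HasDerivAt (fun x : ℝ => x - 2 * ε₁) 1 ρ := (hasDerivAt_id ρ).sub_const _
  have hGder : HasDerivAt G
      (ε₂ * ((γ - 2) * ρ ^ (γ - 2 - 1)) * (ρ - 2 * ε₁) + ε₂ * ρ ^ (γ - 2) * 1) ρ := by
    exact (hc.mul hd).congr_deriv (by ring)
  set G' := ε₂ * ((γ - 2) * ρ ^ (γ - 2 - 1)) * (ρ - 2 * ε₁) + ε₂ * ρ ^ (γ - 2) * 1 with hG'
  have hG'pos : 0 < G' := by
    have h1 : ρ ^ (γ - 2) = ρ ^ (γ - 2 - 1) * ρ := by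
      rw [← Real.rpow_add_one hρ0.ne']; ring_nf
    have h2 : (0:ℝ) < ρ ^ (γ - 2 - 1) := Real.rpow_pos_of_pos hρ0 _
    rw [hG', h1]
    nlinarith [mul_pos h2 hsub, mul_pos hε₂ h2, mul_pos (mul_pos hε₂ h2) hsub]
  have hsq : HasDerivAt (fun x => Real.sqrt (G x)) (1 / (2 * Real.sqrt (G ρ)) * G') ρ :=
    (Real.hasDerivAt_sqrt hGpos.ne').comp ρ hGder
  set H' := 1 / (2 * Real.sqrt (G ρ)) * G' with hH'
  have hH'pos : 0 < H' := by
    have hs0 := Real.sqrt_pos.mpr hGpos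
    rw [hH']; positivity
  have hs : 0 < Real.sqrt (ε₂ * ρ ^ (γ - 2) / (ρ - 2 * ε₁)) := by
    apply Real.sqrt_pos.mpr; positivity
  have hcomp : HasFDerivAt (fun p : ℝ × ℝ => Real.sqrt (G p.1))
      (H' • ContinuousLinearMap.fst ℝ ℝ ℝ) (ρ, u) :=
    hsq.comp_hasFDerivAt (f := (Prod.fst : ℝ × ℝ → ℝ)) (ρ, u) hasFDerivAt_fst
  constructor
  · refine ⟨ContinuousLinearMap.snd ℝ ℝ ℝ - H' • ContinuousLinearMap.fst ℝ ℝ ℝ, ?_, ?_⟩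
    · have heq : lam1 = fun p : ℝ × ℝ => p.2 - Real.sqrt (G p.1) := funext hl1
      rw [heq]
      exact hasFDerivAt_snd.sub hcomp
    · rw [hr1]
      intro h
      simp only [ContinuousLinearMap.sub_apply, ContinuousLinearMap.smul_apply,
        ContinuousLinearMap.coe_snd', ContinuousLinearMap.coe_fst', smul_eq_mul] at h
      nlinarith
  · refine ⟨ContinuousLinearMap.snd ℝ ℝ ℝ + H' • ContinuousLinearMap.fst ℝ ℝ ℝ, ?_, ?_⟩
    · have heq : lam2 = fun p : ℝ × ℝ => p.2 + Real.sqrt (G p.1) := funext hl2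
      rw [heq]
      exact hasFDerivAt_snd.add hcomp
    · rw [hr2]
      intro h
      simp only [ContinuousLinearMap.add_apply, ContinuousLinearMap.smul_apply,
        ContinuousLinearMap.coe_snd', ContinuousLinearMap.coe_fst', smul_eq_mul] at h
      nlinarith
end

section
/- Let γ > 1, ε₂ > 0, 0 < 2ε₁ < ρ₋, and define on (ρ₋, ∞) the function u(ρ) = u₋ − √( ε₂(ρ − ρ₋)(ρ^γ − ρ₋^γ) / (γ(ρ₋ρ − ε₁(ρ + ρ₋))) ). Then the denominator satisfies ρ₋ρ − ε₁(ρ + ρ₋) > 0 for all ρ > ρ₋, and u is strictly decreasing on (ρ₋, ∞). -/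
/-- along the backward shock curve of the flux-perturbed
isentropic Euler system, the denominator ρ₋ρ − ε₁(ρ + ρ₋) is positive for
ρ > ρ₋ and the curve u(ρ) is strictly decreasing on (ρ₋, ∞). -/
theorem backward_shock_curve_strictly_decreasing
    (γ ε₁ ε₂ ρm um : ℝ) (hγ : 1 < γ) (hε₁ : 0 < ε₁) (hε₂ : 0 < ε₂)
    (hρ : 2 * ε₁ < ρm)
    (u : ℝ → ℝ)
    (hu : ∀ ρ, ρm < ρ → u ρ = um -
      Real.sqrt (ε₂ * (ρ - ρm) * (ρ ^ γ - ρm ^ γ) /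
        (γ * (ρm * ρ - ε₁ * (ρ + ρm))))) :
    (∀ ρ, ρm < ρ → 0 < ρm * ρ - ε₁ * (ρ + ρm)) ∧
    StrictAntiOn u (Set.Ioi ρm) := by
  have hρm : 0 < ρm := by linarith
  have hden : ∀ ρ, ρm < ρ → 0 < ρm * ρ - ε₁ * (ρ + ρm) := by
    intro ρ hρ'
    nlinarith
  refine ⟨hden, ?_⟩
  intro a ha b hb hab
  simp only [Set.mem_Ioi] at ha hb
  rw [hu a ha, hu b hb]
  have hγ0 : 0 < γ := by linarith
  have hDa := hden a ha
  have hDb := hden b hb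
  have hNa : 0 < a ^ γ - ρm ^ γ :=
    sub_pos.mpr (Real.rpow_lt_rpow hρm.le ha hγ0)
  have hNb : 0 < b ^ γ - ρm ^ γ :=
    sub_pos.mpr (Real.rpow_lt_rpow hρm.le hb hγ0)
  have hpow : a ^ γ < b ^ γ := Real.rpow_lt_rpow (by linarith) hab hγ0
  -- cross-multiplied monotonicity of (ρ - ρm)/D(ρ)
  have hf : (a - ρm) * (ρm * b - ε₁ * (b + ρm)) <
      (b - ρm) * (ρm * a - ε₁ * (a + ρm)) := by
    nlinarith [mul_pos hρm (sub_pos.mpr hab)]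
  have key : ε₂ * (a - ρm) * (a ^ γ - ρm ^ γ) / (γ * (ρm * a - ε₁ * (a + ρm)))
      < ε₂ * (b - ρm) * (b ^ γ - ρm ^ γ) / (γ * (ρm * b - ε₁ * (b + ρm))) := by
    rw [div_lt_div_iff₀ (by positivity) (by positivity)]
    have h1 : (a - ρm) * (ρm * b - ε₁ * (b + ρm)) * (a ^ γ - ρm ^ γ) <
        (b - ρm) * (ρm * a - ε₁ * (a + ρm)) * (b ^ γ - ρm ^ γ) := by
      have hpa : 0 < (a - ρm) * (ρm * b - ε₁ * (b + ρm)) :=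
        mul_pos (by linarith) hDb
      calc (a - ρm) * (ρm * b - ε₁ * (b + ρm)) * (a ^ γ - ρm ^ γ)
          < (b - ρm) * (ρm * a - ε₁ * (a + ρm)) * (a ^ γ - ρm ^ γ) := by
            exact mul_lt_mul_of_pos_right hf hNa
        _ < (b - ρm) * (ρm * a - ε₁ * (a + ρm)) * (b ^ γ - ρm ^ γ) := by
            apply mul_lt_mul_of_pos_left (by linarith)
            exact mul_pos (by linarith) hDa
    nlinarith [mul_pos hε₂ hγ0, mul_lt_mul_of_pos_left h1 (mul_pos hε₂ hγ0)]
  have hga : 0 ≤ ε₂ * (a - ρm) * (a ^ γ - ρm ^ γ) /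
      (γ * (ρm * a - ε₁ * (a + ρm))) := by
    apply le_of_lt
    apply div_pos _ (by positivity)
    exact mul_pos (mul_pos hε₂ (by linarith)) hNa
  have := Real.sqrt_lt_sqrt hga key
  linarith
end

section
/- Let γ > 1, ε₁, ε₂ > 0, ρ_l, ρ_r > 2ε₁ with ρ_l ≠ ρ_r, and let u_l, u_r, σ be real numbers satisfying the Rankine–Hugoniot relations −σ(ρ_r − ρ_l) + ((ρ_r − 2ε₁)u_r − (ρ_l − 2ε₁)u_l) = 0 and −σ(ρ_r u_r − ρ_l u_l) + ((ρ_r − ε₁)u_r² − (ρ_l − ε₁)u_l² + ε₂(ρ_r^γ − ρ_l^γ)/γ) = 0. Then (ρ_lρ_r − ε₁(ρ_l + ρ_r))(u_r − u_l)² = (ε₂/γ)(ρ_r − ρ_l)(ρ_r^γ − ρ_l^γ); moreover if u_r ≠ u_l then ρ_lρ_r − ε₁(ρ_l + ρ_r) > 0. -/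
/-- eliminating the shock speed from the Rankine–Hugoniot
relations of the flux-perturbed isentropic Euler system yields
(ρ_lρ_r − ε₁(ρ_l+ρ_r))(u_r−u_l)² = (ε₂/γ)(ρ_r−ρ_l)(ρ_r^γ−ρ_l^γ), and the
left factor is positive whenever u_r ≠ u_l. -/
theorem rankine_hugoniot_elimination
    (γ ε₁ ε₂ ρl ρr ul ur σ : ℝ) (hγ : 1 < γ) (hε₁ : 0 < ε₁) (hε₂ : 0 < ε₂)
    (hρl : 2 * ε₁ < ρl) (hρr : 2 * ε₁ < ρr) (hne : ρl ≠ ρr)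
    (rh1 : -σ * (ρr - ρl) + ((ρr - 2 * ε₁) * ur - (ρl - 2 * ε₁) * ul) = 0)
    (rh2 : -σ * (ρr * ur - ρl * ul) +
      ((ρr - ε₁) * ur ^ 2 - (ρl - ε₁) * ul ^ 2 +
        ε₂ * (ρr ^ γ - ρl ^ γ) / γ) = 0) :
    (ρl * ρr - ε₁ * (ρl + ρr)) * (ur - ul) ^ 2 =
      ε₂ / γ * (ρr - ρl) * (ρr ^ γ - ρl ^ γ) ∧
    (ur ≠ ul → 0 < ρl * ρr - ε₁ * (ρl + ρr)) := by
  constructor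
  · linear_combination (ρr * ur - ρl * ul) * rh1 - (ρr - ρl) * rh2
  · intro _
    nlinarith [mul_pos (by linarith : (0:ℝ) < ρl - ε₁) (by linarith : (0:ℝ) < ρr - ε₁),
      sq_nonneg ε₁, hε₁]
end

section
/- Let γ > 1, ε₁, ε₂ > 0 and ρ_l, ρ_r > 2ε₁ with ρ_l ≠ ρ_r. Suppose (ρ_l,u_l), (ρ_r,u_r), σ satisfy the Rankine–Hugoniot relations −σ(ρ_r − ρ_l) + ((ρ_r − 2ε₁)u_r − (ρ_l − 2ε₁)u_l) = 0, −σ(ρ_r u_r − ρ_l u_l) + ((ρ_r − ε₁)u_r² − (ρ_l − ε₁)u_l² + ε₂(ρ_r^γ − ρ_l^γ)/γ) = 0, together with the Lax entropy inequalities for a backward shock: σ < u_l − √(ε₂ρ_l^{γ−2}(ρ_l − 2ε₁)) and u_r − √(ε₂ρ_r^{γ−2}(ρ_r − 2ε₁)) < σ < u_r + √(ε₂ρ_r^{γ−2}(ρ_r − 2ε₁)). Then ρ_l < ρ_r and u_r < u_l. -/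
set_option maxHeartbeats 1000000 in
/-- for a backward shock of the flux-perturbed isentropic
Euler system (Rankine–Hugoniot relations together with the Lax entropy
inequalities), the density increases and the velocity decreases across
the shock: ρ_l < ρ_r and u_r < u_l. -/
theorem backward_shock_compressive
    (γ ε₁ ε₂ ρl ρr ul ur σ : ℝ) (hγ : 1 < γ) (hε₁ : 0 < ε₁) (hε₂ : 0 < ε₂)
    (hρl : 2 * ε₁ < ρl) (hρr : 2 * ε₁ < ρr) (hne : ρl ≠ ρr)
    (rh1 : -σ * (ρr - ρl) + ((ρr - 2 * ε₁) * ur - (ρl - 2 * ε₁) * ul) = 0)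
    (rh2 : -σ * (ρr * ur - ρl * ul) +
      ((ρr - ε₁) * ur ^ 2 - (ρl - ε₁) * ul ^ 2 +
        ε₂ * (ρr ^ γ - ρl ^ γ) / γ) = 0)
    (lax1 : σ < ul - Real.sqrt (ε₂ * ρl ^ (γ - 2) * (ρl - 2 * ε₁)))
    (lax2 : ur - Real.sqrt (ε₂ * ρr ^ (γ - 2) * (ρr - 2 * ε₁)) < σ)
    (lax3 : σ < ur + Real.sqrt (ε₂ * ρr ^ (γ - 2) * (ρr - 2 * ε₁))) :
    ρl < ρr ∧ ur < ul := by
  have hρl0 : 0 < ρl := by linarith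
  have hρr0 : 0 < ρr := by linarith
  have hρl2 : 0 < ρl - 2 * ε₁ := by linarith
  have hρr2 : 0 < ρr - 2 * ε₁ := by linarith
  have hcl2nn : 0 ≤ ε₂ * ρl ^ (γ - 2) * (ρl - 2 * ε₁) := by positivity
  have hcr2nn : 0 ≤ ε₂ * ρr ^ (γ - 2) * (ρr - 2 * ε₁) := by positivity
  have hvl : Real.sqrt (ε₂ * ρl ^ (γ - 2) * (ρl - 2 * ε₁)) < ul - σ := by linarith
  have hvlpos : 0 < ul - σ := lt_of_le_of_lt (Real.sqrt_nonneg _) hvl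
  have hvl2 : ε₂ * ρl ^ (γ - 2) * (ρl - 2 * ε₁) < (ul - σ) ^ 2 := by
    nlinarith [Real.sq_sqrt hcl2nn, Real.sqrt_nonneg (ε₂ * ρl ^ (γ - 2) * (ρl - 2 * ε₁))]
  have hvr2 : (ur - σ) ^ 2 < ε₂ * ρr ^ (γ - 2) * (ρr - 2 * ε₁) := by
    have h1 : ur - σ < Real.sqrt (ε₂ * ρr ^ (γ - 2) * (ρr - 2 * ε₁)) := by linarith
    have h2 : -Real.sqrt (ε₂ * ρr ^ (γ - 2) * (ρr - 2 * ε₁)) < ur - σ := by linarith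
    nlinarith [Real.sq_sqrt hcr2nn, Real.sqrt_nonneg (ε₂ * ρr ^ (γ - 2) * (ρr - 2 * ε₁))]
  have hm : (ρr - 2 * ε₁) * (ur - σ) = (ρl - 2 * ε₁) * (ul - σ) := by
    linear_combination rh1
  have hgl : ε₂ * ρl ^ (γ - 2) * (ρl - 2 * ε₁) ^ 3 < ((ρl - 2 * ε₁) * (ul - σ)) ^ 2 := by
    nlinarith [mul_lt_mul_of_pos_left hvl2 (show (0:ℝ) < (ρl - 2 * ε₁) ^ 2 by positivity)]
  have hgr : ((ρr - 2 * ε₁) * (ur - σ)) ^ 2 < ε₂ * ρr ^ (γ - 2) * (ρr - 2 * ε₁) ^ 3 := by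
    nlinarith [mul_lt_mul_of_pos_left hvr2 (show (0:ℝ) < (ρr - 2 * ε₁) ^ 2 by positivity)]
  have hglr : ε₂ * ρl ^ (γ - 2) * (ρl - 2 * ε₁) ^ 3 <
      ε₂ * ρr ^ (γ - 2) * (ρr - 2 * ε₁) ^ 3 := by
    calc ε₂ * ρl ^ (γ - 2) * (ρl - 2 * ε₁) ^ 3 < ((ρl - 2 * ε₁) * (ul - σ)) ^ 2 := hgl
      _ = ((ρr - 2 * ε₁) * (ur - σ)) ^ 2 := by rw [hm]
      _ < ε₂ * ρr ^ (γ - 2) * (ρr - 2 * ε₁) ^ 3 := hgr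
  have hρlr : ρl < ρr := by
    by_contra h
    push_neg at h
    have e1 : ρl ^ (γ - 2) * (ρl - 2 * ε₁) ^ 3 = ρl ^ (γ + 1) * ((ρl - 2 * ε₁) / ρl) ^ 3 := by
      rw [div_pow, show (γ - 2) = (γ + 1) - (3:ℝ) by ring, Real.rpow_sub hρl0,
        show ((3:ℝ)) = ((3:ℕ):ℝ) by norm_num, Real.rpow_natCast]
      ring
    have e2 : ρr ^ (γ - 2) * (ρr - 2 * ε₁) ^ 3 = ρr ^ (γ + 1) * ((ρr - 2 * ε₁) / ρr) ^ 3 := by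
      rw [div_pow, show (γ - 2) = (γ + 1) - (3:ℝ) by ring, Real.rpow_sub hρr0,
        show ((3:ℝ)) = ((3:ℕ):ℝ) by norm_num, Real.rpow_natCast]
      ring
    have hA : ρr ^ (γ + 1) ≤ ρl ^ (γ + 1) :=
      Real.rpow_le_rpow hρr0.le h (by linarith)
    have hB : (ρr - 2 * ε₁) / ρr ≤ (ρl - 2 * ε₁) / ρl := by
      rw [div_le_div_iff₀ hρr0 hρl0]; nlinarith
    have hBnn : 0 ≤ (ρr - 2 * ε₁) / ρr := by positivity
    have hfin : ε₂ * ρr ^ (γ - 2) * (ρr - 2 * ε₁) ^ 3 ≤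
        ε₂ * ρl ^ (γ - 2) * (ρl - 2 * ε₁) ^ 3 := by
      rw [mul_assoc, mul_assoc, e1, e2]
      refine mul_le_mul_of_nonneg_left ?_ hε₂.le
      exact mul_le_mul hA (pow_le_pow_left₀ hBnn hB 3) (by positivity) (by positivity)
    linarith
  refine ⟨hρlr, ?_⟩
  nlinarith [hm, mul_pos hρl2 hvlpos, hρr2, hvlpos]
end

section
/- (Lemma 5.1) Let γ > 1, ρ₋, ρ₊ > 0 and u₋ > u₊. Let (ε₁ⁿ), (ε₂ⁿ) be sequences of positive numbers tending to 0, and for each n let ρ*ⁿ > max(ρ₋,ρ₊) and u*ⁿ ∈ ℝ satisfy ρ₋ρ*ⁿ − ε₁ⁿ(ρ₋ + ρ*ⁿ) > 0, ρ₊ρ*ⁿ − ε₁ⁿ(ρ₊ + ρ*ⁿ) > 0, together with the two-shock relations u*ⁿ − u₋ = −√( ε₂ⁿ(ρ*ⁿ − ρ₋)((ρ*ⁿ)^γ − ρ₋^γ) / (γ(ρ₋ρ*ⁿ − ε₁ⁿ(ρ₋ + ρ*ⁿ))) ) and u₊ − u*ⁿ = −√( ε₂ⁿ(ρ*ⁿ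 − ρ₊)((ρ*ⁿ)^γ − ρ₊^γ) / (γ(ρ₊ρ*ⁿ − ε₁ⁿ(ρ₊ + ρ*ⁿ))) ). Then ρ*ⁿ → +∞ as n → ∞. -/
open Filter

private lemma blowup_aux (γ ρ M d : ℝ) (hγ : 1 < γ) (hρ : 0 < ρ) (hρM : ρ < M)
    (hd : 0 < d) (ε₁ ε₂ : ℕ → ℝ)
    (hε₁pos : ∀ n, 0 < ε₁ n) (hε₂pos : ∀ n, 0 ≤ ε₂ n)
    (hε₁ : Tendsto ε₁ atTop (nhds 0)) (hε₂ : Tendsto ε₂ atTop (nhds 0)) :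
    ∀ᶠ n in atTop, ∀ r : ℝ, ρ < r → r ≤ M →
      0 < ρ * r - ε₁ n * (ρ + r) →
      Real.sqrt (ε₂ n * (r - ρ) * (r ^ γ - ρ ^ γ) /
        (γ * (ρ * r - ε₁ n * (ρ + r)))) < d := by
  have hγ0 : (0:ℝ) < γ := lt_trans one_pos hγ
  have hM0 : 0 < M := hρ.trans hρM
  have hMγ : 0 < M ^ γ := Real.rpow_pos_of_pos hM0 γ
  have h1 : ∀ᶠ n in atTop, ε₁ n * (ρ + M) < ρ ^ 2 / 2 := by
    have ht : Tendsto (fun n => ε₁ n * (ρ + M)) atTop (nhds 0) := by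
      simpa using hε₁.mul_const (ρ + M)
    exact ht.eventually_lt_const (by positivity)
  have h2 : ∀ᶠ n in atTop, ε₂ n * M * M ^ γ / (γ * (ρ ^ 2 / 2)) < d ^ 2 := by
    have ht : Tendsto (fun n => ε₂ n * M * M ^ γ / (γ * (ρ ^ 2 / 2))) atTop (nhds 0) := by
      simpa using ((hε₂.mul_const M).mul_const (M ^ γ)).div_const (γ * (ρ ^ 2 / 2))
    exact ht.eventually_lt_const (by positivity)
  filter_upwards [h1, h2] with n hn1 hn2
  intro r hr hrM hden
  rw [Real.sqrt_lt' hd]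
  refine lt_of_le_of_lt ?_ hn2
  have hε₁n := (hε₁pos n).le
  have hDlb : ρ ^ 2 / 2 ≤ ρ * r - ε₁ n * (ρ + r) := by nlinarith
  have hrρ0 : (0:ℝ) ≤ r - ρ := by linarith
  have hrρM : r - ρ ≤ M := by linarith
  have hrγ : r ^ γ ≤ M ^ γ :=
    Real.rpow_le_rpow (le_of_lt (hρ.trans hr)) hrM hγ0.le
  have hργ : (0:ℝ) ≤ ρ ^ γ := (Real.rpow_pos_of_pos hρ γ).le
  have hργr : ρ ^ γ ≤ r ^ γ := Real.rpow_le_rpow hρ.le hr.le hγ0.le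
  have hnum : ε₂ n * (r - ρ) * (r ^ γ - ρ ^ γ) ≤ ε₂ n * M * M ^ γ := by
    have h0 : 0 ≤ r ^ γ - ρ ^ γ := by linarith
    have h1' : r ^ γ - ρ ^ γ ≤ M ^ γ := by linarith
    have h2' : ε₂ n * (r - ρ) ≤ ε₂ n * M :=
      mul_le_mul_of_nonneg_left hrρM (hε₂pos n)
    exact mul_le_mul h2' h1' h0 (mul_nonneg (hε₂pos n) hM0.le)
  exact div_le_div₀ (mul_nonneg (mul_nonneg (hε₂pos n) hM0.le) hMγ.le) hnum (by positivity)
    (mul_le_mul_of_nonneg_left hDlb hγ0.le)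

/-- Lemma 5.1: the intermediate density of the two-shock
Riemann solution blows up as the flux-perturbation parameters vanish. -/
theorem intermediate_density_blow_up
    (γ ρm ρp um up : ℝ) (hγ : 1 < γ) (hρm : 0 < ρm) (hρp : 0 < ρp)
    (hu : up < um)
    (ε₁ ε₂ ρs us : ℕ → ℝ)
    (hε₁pos : ∀ n, 0 < ε₁ n) (hε₂pos : ∀ n, 0 < ε₂ n)
    (hε₁ : Filter.Tendsto ε₁ Filter.atTop (nhds 0))
    (hε₂ : Filter.Tendsto ε₂ Filter.atTop (nhds 0))
    (hρs : ∀ n, max ρm ρp < ρs n)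
    (hd1 : ∀ n, 0 < ρm * ρs n - ε₁ n * (ρm + ρs n))
    (hd2 : ∀ n, 0 < ρp * ρs n - ε₁ n * (ρp + ρs n))
    (hback : ∀ n, us n - um =
      -Real.sqrt (ε₂ n * (ρs n - ρm) * ((ρs n) ^ γ - ρm ^ γ) /
        (γ * (ρm * ρs n - ε₁ n * (ρm + ρs n)))))
    (hforw : ∀ n, up - us n =
      -Real.sqrt (ε₂ n * (ρs n - ρp) * ((ρs n) ^ γ - ρp ^ γ) /
        (γ * (ρp * ρs n - ε₁ n * (ρp + ρs n))))) :
    Filter.Tendsto ρs Filter.atTop Filter.atTop := by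
  rw [Filter.tendsto_atTop]
  intro b
  have hd0 : 0 < (um - up) / 2 := by linarith
  set M := max b (max ρm ρp + 1) with hM
  have hmax1 : max ρm ρp + 1 ≤ M := le_max_right _ _
  have hρmM : ρm < M := by
    have := le_max_left ρm ρp; linarith
  have hρpM : ρp < M := by
    have := le_max_right ρm ρp; linarith
  have hbM : b ≤ M := le_max_left _ _
  have hA := blowup_aux γ ρm M ((um - up) / 2) hγ hρm hρmM hd0 ε₁ ε₂
    hε₁pos (fun n => (hε₂pos n).le) hε₁ hε₂
  have hB := blowup_aux γ ρp M ((um - up) / 2) hγ hρp hρpM hd0 ε₁ ε₂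
    hε₁pos (fun n => (hε₂pos n).le) hε₁ hε₂
  filter_upwards [hA, hB] with n hAn hBn
  by_contra hcon
  push_neg at hcon
  have hrM : ρs n ≤ M := le_trans hcon.le hbM
  have h1 := hAn (ρs n) ((le_max_left ρm ρp).trans_lt (hρs n)) hrM (hd1 n)
  have h2 := hBn (ρs n) ((le_max_right ρm ρp).trans_lt (hρs n)) hrM (hd2 n)
  have e1 := hback n
  have e2 := hforw n
  linarith
end

section
/- (Lemma 5.2) Let γ > 1, ρ₋, ρ₊ > 0 and u₋ > u₊. Let (ε₁ⁿ), (ε₂ⁿ) be positive sequences tending to 0 and, for each n, let ρ*ⁿ > max(ρ₋,ρ₊), u*ⁿ ∈ ℝ satisfy ρ₋ρ*ⁿ − ε₁ⁿ(ρ₋ + ρ*ⁿ) > 0, ρ₊ρ*ⁿ − ε₁ⁿ(ρ₊ + ρ*ⁿ) > 0, u*ⁿ − u₋ = −√( ε₂ⁿ(ρ*ⁿ − ρ₋)((ρ*ⁿ)^γ − ρ₋^γ) / (γ(ρ₋ρ*ⁿ − ε₁ⁿ(ρ₋ + ρ*ⁿ))) ) and u₊ − u*ⁿ = −√( ε₂ⁿ(ρ*ⁿ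 − ρ₊)((ρ*ⁿ)^γ − ρ₊^γ) / (γ(ρ₊ρ*ⁿ − ε₁ⁿ(ρ₊ + ρ*ⁿ))) ). Then ε₂ⁿ(ρ*ⁿ)^γ → γρ₋ρ₊((u₋ − u₊)/(√ρ₋ + √ρ₊))² as n → ∞. -/
open Filter Real Topology

private lemma shock_pos (γ ρ0 ε₁ ε₂ ρs : ℝ) (hγ : 0 < γ) (hρ0 : 0 < ρ0)
    (hε₂ : 0 < ε₂) (hρs : ρ0 < ρs)
    (hd : 0 < ρ0 * ρs - ε₁ * (ρ0 + ρs)) :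
    0 < ε₂ * (ρs - ρ0) * (ρs ^ γ - ρ0 ^ γ) / (γ * (ρ0 * ρs - ε₁ * (ρ0 + ρs))) := by
  have h1 : ρ0 ^ γ < ρs ^ γ := Real.rpow_lt_rpow hρ0.le hρs hγ
  have h2 : 0 < ε₂ * (ρs - ρ0) * (ρs ^ γ - ρ0 ^ γ) :=
    mul_pos (mul_pos hε₂ (by linarith)) (by linarith)
  exact div_pos h2 (mul_pos hγ hd)

private lemma shock_bound (γ ρ0 ε₁ ε₂ ρs : ℝ) (hγ : 0 < γ) (hρ0 : 0 < ρ0)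
    (hε₁ : 0 ≤ ε₁) (hε₂ : 0 < ε₂) (hρs : ρ0 < ρs)
    (h4 : ε₁ ≤ ρ0 / 4) :
    ε₂ * (ρs - ρ0) * (ρs ^ γ - ρ0 ^ γ) / (γ * (ρ0 * ρs - ε₁ * (ρ0 + ρs))) ≤
      2 / (γ * ρ0) * (ε₂ * ρs ^ γ) := by
  have hρspos : 0 < ρs := lt_trans hρ0 hρs
  have hrγpos : 0 < ρs ^ γ := Real.rpow_pos_of_pos hρspos γ
  have h0γ : 0 < ρ0 ^ γ := Real.rpow_pos_of_pos hρ0 γ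
  have h2' : 0 ≤ ρs ^ γ - ρ0 ^ γ := by
    have := Real.rpow_le_rpow hρ0.le hρs.le hγ.le; linarith
  have hnum : ε₂ * (ρs - ρ0) * (ρs ^ γ - ρ0 ^ γ) ≤ ε₂ * ρs * ρs ^ γ := by
    have ha : ε₂ * (ρs - ρ0) ≤ ε₂ * ρs := by nlinarith
    have : ε₂ * (ρs - ρ0) * (ρs ^ γ - ρ0 ^ γ) ≤ ε₂ * ρs * ρs ^ γ :=
      mul_le_mul ha (by linarith) h2' (by positivity)
    exact this
  have hden : γ * (ρ0 / 2 * ρs) ≤ γ * (ρ0 * ρs - ε₁ * (ρ0 + ρs)) := by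
    have h : ε₁ * (ρ0 + ρs) ≤ ρ0 / 4 * (2 * ρs) :=
      mul_le_mul h4 (by linarith) (by linarith) (by linarith)
    nlinarith
  have hdpos : 0 < γ * (ρ0 / 2 * ρs) := by positivity
  have hγ' : γ ≠ 0 := ne_of_gt hγ
  have hρ0' : ρ0 ≠ 0 := ne_of_gt hρ0
  have hρs' : ρs ≠ 0 := ne_of_gt hρspos
  calc ε₂ * (ρs - ρ0) * (ρs ^ γ - ρ0 ^ γ) / (γ * (ρ0 * ρs - ε₁ * (ρ0 + ρs)))
      ≤ ε₂ * ρs * ρs ^ γ / (γ * (ρ0 / 2 * ρs)) :=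
        div_le_div₀ (by positivity) hnum hdpos hden
    _ = 2 / (γ * ρ0) * (ε₂ * ρs ^ γ) := by field_simp

private lemma shock_ratio_tendsto (γ ρ0 : ℝ) (ε₁ ε₂ ρs : ℕ → ℝ) (hγ : 0 < γ)
    (hρ0 : 0 < ρ0)
    (hε₂pos : ∀ n, 0 < ε₂ n) (hρs : ∀ n, ρ0 < ρs n)
    (hd : ∀ n, 0 < ρ0 * ρs n - ε₁ n * (ρ0 + ρs n))
    (hε₁0 : Tendsto ε₁ atTop (𝓝 0)) (hTop : Tendsto ρs atTop atTop) :
    Tendsto (fun n => ε₂ n * (ρs n - ρ0) * ((ρs n) ^ γ - ρ0 ^ γ) /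
      (γ * (ρ0 * ρs n - ε₁ n * (ρ0 + ρs n))) / (ε₂ n * (ρs n) ^ γ))
      atTop (𝓝 (1 / (γ * ρ0))) := by
  have hρspos : ∀ n, 0 < ρs n := fun n => lt_trans hρ0 (hρs n)
  have heq : ∀ n, ε₂ n * (ρs n - ρ0) * ((ρs n) ^ γ - ρ0 ^ γ) /
      (γ * (ρ0 * ρs n - ε₁ n * (ρ0 + ρs n))) / (ε₂ n * (ρs n) ^ γ)
      = (1 - ρ0 / ρs n) * (1 - ρ0 ^ γ / (ρs n) ^ γ) /
        (γ * (ρ0 - ε₁ n * (ρ0 + ρs n) / ρs n)) := by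
    intro n
    have h1 : ρs n ≠ 0 := ne_of_gt (hρspos n)
    have h2 : (ρs n) ^ γ ≠ 0 := ne_of_gt (Real.rpow_pos_of_pos (hρspos n) γ)
    have h3 : ε₂ n ≠ 0 := ne_of_gt (hε₂pos n)
    have h4 : ρ0 * ρs n - ε₁ n * (ρ0 + ρs n) ≠ 0 := ne_of_gt (hd n)
    have h5 : γ ≠ 0 := ne_of_gt hγ
    have h6 : ρ0 - ε₁ n * (ρ0 + ρs n) / ρs n ≠ 0 := by
      have : ρ0 - ε₁ n * (ρ0 + ρs n) / ρs n =
          (ρ0 * ρs n - ε₁ n * (ρ0 + ρs n)) / ρs n := by field_simp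
      rw [this]
      exact ne_of_gt (div_pos (hd n) (hρspos n))
    field_simp
  have l1 : Tendsto (fun n => ρ0 / ρs n) atTop (𝓝 0) := tendsto_const_nhds.div_atTop hTop
  have lpow : Tendsto (fun n => (ρs n) ^ γ) atTop atTop := (tendsto_rpow_atTop hγ).comp hTop
  have l2 : Tendsto (fun n => ρ0 ^ γ / (ρs n) ^ γ) atTop (𝓝 0) :=
    tendsto_const_nhds.div_atTop lpow
  have l3 : Tendsto (fun n => ε₁ n * (ρ0 + ρs n) / ρs n) atTop (𝓝 0) := by
    have h : Tendsto (fun n => ε₁ n * (ρ0 / ρs n + 1)) atTop (𝓝 (0 * (0 + 1))) :=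
      hε₁0.mul (l1.add tendsto_const_nhds)
    have h' : Tendsto (fun n => ε₁ n * (ρ0 / ρs n + 1)) atTop (𝓝 0) := by simpa using h
    refine h'.congr fun n => ?_
    have h1 : ρs n ≠ 0 := ne_of_gt (hρspos n)
    field_simp
  have num : Tendsto (fun n => (1 - ρ0 / ρs n) * (1 - ρ0 ^ γ / (ρs n) ^ γ)) atTop
      (𝓝 ((1 - 0) * (1 - 0))) := (tendsto_const_nhds.sub l1).mul (tendsto_const_nhds.sub l2)
  have den : Tendsto (fun n => γ * (ρ0 - ε₁ n * (ρ0 + ρs n) / ρs n)) atTop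
      (𝓝 (γ * (ρ0 - 0))) := tendsto_const_nhds.mul (tendsto_const_nhds.sub l3)
  have hne : γ * (ρ0 - 0) ≠ 0 := by
    have : 0 < γ * ρ0 := mul_pos hγ hρ0
    simpa using ne_of_gt this
  have := num.div den hne
  have hfin : ((1:ℝ) - 0) * (1 - 0) / (γ * (ρ0 - 0)) = 1 / (γ * ρ0) := by norm_num
  rw [hfin] at this
  exact this.congr fun n => (heq n).symm

/-- Lemma 5.2: the scaled pressure ε₂ⁿ(ρ*ⁿ)^γ of the
intermediate state converges to γρ₋ρ₊((u₋−u₊)/(√ρ₋+√ρ₊))². -/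
theorem intermediate_pressure_limit
    (γ ρm ρp um up : ℝ) (hγ : 1 < γ) (hρm : 0 < ρm) (hρp : 0 < ρp)
    (hu : up < um)
    (ε₁ ε₂ ρs us : ℕ → ℝ)
    (hε₁pos : ∀ n, 0 < ε₁ n) (hε₂pos : ∀ n, 0 < ε₂ n)
    (hε₁ : Filter.Tendsto ε₁ Filter.atTop (nhds 0))
    (hε₂ : Filter.Tendsto ε₂ Filter.atTop (nhds 0))
    (hρs : ∀ n, max ρm ρp < ρs n)
    (hd1 : ∀ n, 0 < ρm * ρs n - ε₁ n * (ρm + ρs n))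
    (hd2 : ∀ n, 0 < ρp * ρs n - ε₁ n * (ρp + ρs n))
    (hback : ∀ n, us n - um =
      -Real.sqrt (ε₂ n * (ρs n - ρm) * ((ρs n) ^ γ - ρm ^ γ) /
        (γ * (ρm * ρs n - ε₁ n * (ρm + ρs n)))))
    (hforw : ∀ n, up - us n =
      -Real.sqrt (ε₂ n * (ρs n - ρp) * ((ρs n) ^ γ - ρp ^ γ) /
        (γ * (ρp * ρs n - ε₁ n * (ρp + ρs n))))) :
    Filter.Tendsto (fun n => ε₂ n * (ρs n) ^ γ) Filter.atTop
      (nhds (γ * ρm * ρp *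
        ((um - up) / (Real.sqrt ρm + Real.sqrt ρp)) ^ 2)) := by
  have hγ0 : 0 < γ := by linarith
  have hρsm : ∀ n, ρm < ρs n := fun n => lt_of_le_of_lt (le_max_left _ _) (hρs n)
  have hρsp : ∀ n, ρp < ρs n := fun n => lt_of_le_of_lt (le_max_right _ _) (hρs n)
  have hρspos : ∀ n, 0 < ρs n := fun n => lt_trans hρm (hρsm n)
  have hD : 0 < um - up := sub_pos.mpr hu
  set Am : ℕ → ℝ := fun n => ε₂ n * (ρs n - ρm) * ((ρs n) ^ γ - ρm ^ γ) /
      (γ * (ρm * ρs n - ε₁ n * (ρm + ρs n))) with hAm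
  set Ap : ℕ → ℝ := fun n => ε₂ n * (ρs n - ρp) * ((ρs n) ^ γ - ρp ^ γ) /
      (γ * (ρp * ρs n - ε₁ n * (ρp + ρs n))) with hAp
  set P : ℕ → ℝ := fun n => ε₂ n * (ρs n) ^ γ with hP
  have hPpos : ∀ n, 0 < P n := fun n => by
    simp only [hP]
    exact mul_pos (hε₂pos n) (Real.rpow_pos_of_pos (hρspos n) γ)
  have key : ∀ n, um - up = Real.sqrt (Am n) + Real.sqrt (Ap n) := by
    intro n
    have h1 := hback n
    have h2 := hforw n
    simp only [hAm, hAp]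
    linarith
  have hAmpos : ∀ n, 0 < Am n := fun n => by
    simp only [hAm]
    exact shock_pos γ ρm (ε₁ n) (ε₂ n) (ρs n) hγ0 hρm (hε₂pos n) (hρsm n) (hd1 n)
  have hAppos : ∀ n, 0 < Ap n := fun n => by
    simp only [hAp]
    exact shock_pos γ ρp (ε₁ n) (ε₂ n) (ρs n) hγ0 hρp (hε₂pos n) (hρsp n) (hd2 n)
  -- step 1 : ρs → ∞
  set K : ℝ := Real.sqrt (2 / (γ * ρm)) + Real.sqrt (2 / (γ * ρp)) with hKdef
  have hK : 0 < K := by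
    have : 0 < Real.sqrt (2 / (γ * ρm)) := Real.sqrt_pos.mpr (by positivity)
    have h2 : 0 ≤ Real.sqrt (2 / (γ * ρp)) := Real.sqrt_nonneg _
    simp only [hKdef]; linarith
  have hPlb : ∀ᶠ n in atTop, ((um - up) / K) ^ 2 ≤ P n := by
    filter_upwards [hε₁.eventually (gt_mem_nhds (show (0:ℝ) < ρm / 4 by positivity)),
      hε₁.eventually (gt_mem_nhds (show (0:ℝ) < ρp / 4 by positivity))] with n h1 h2
    have hbm : Am n ≤ 2 / (γ * ρm) * P n := by
      simp only [hAm, hP]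
      exact shock_bound γ ρm (ε₁ n) (ε₂ n) (ρs n) hγ0 hρm (hε₁pos n).le (hε₂pos n)
        (hρsm n) h1.le
    have hbp : Ap n ≤ 2 / (γ * ρp) * P n := by
      simp only [hAp, hP]
      exact shock_bound γ ρp (ε₁ n) (ε₂ n) (ρs n) hγ0 hρp (hε₁pos n).le (hε₂pos n)
        (hρsp n) h2.le
    have hsm : Real.sqrt (Am n) ≤ Real.sqrt (2 / (γ * ρm)) * Real.sqrt (P n) := by
      rw [← Real.sqrt_mul (by positivity)]
      exact Real.sqrt_le_sqrt hbm
    have hsp : Real.sqrt (Ap n) ≤ Real.sqrt (2 / (γ * ρp)) * Real.sqrt (P n) := by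
      rw [← Real.sqrt_mul (by positivity)]
      exact Real.sqrt_le_sqrt hbp
    have hKs : um - up ≤ K * Real.sqrt (P n) := by
      have := key n
      simp only [hKdef]
      rw [add_mul]
      linarith
    have hdiv : (um - up) / K ≤ Real.sqrt (P n) := (div_le_iff₀' hK).mpr hKs
    calc ((um - up) / K) ^ 2 ≤ (Real.sqrt (P n)) ^ 2 :=
          pow_le_pow_left₀ (by positivity) hdiv 2
      _ = P n := Real.sq_sqrt (hPpos n).le
  have hinv : Tendsto (fun n => ((um - up) / K) ^ 2 / ε₂ n) atTop atTop := by
    have h' : Tendsto ε₂ atTop (𝓝[>] 0) :=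
      tendsto_nhdsWithin_of_tendsto_nhds_of_eventually_within _ hε₂
        (Filter.Eventually.of_forall fun n => Set.mem_Ioi.mpr (hε₂pos n))
    have hi := h'.inv_tendsto_nhdsGT_zero
    have hc : 0 < ((um - up) / K) ^ 2 := by positivity
    have := hi.const_mul_atTop hc
    refine this.congr fun n => ?_
    rw [div_eq_mul_inv]
    rfl
  have hgTop : Tendsto (fun n => (ρs n) ^ γ) atTop atTop := by
    refine tendsto_atTop_mono' atTop ?_ hinv
    filter_upwards [hPlb] with n h
    rw [div_le_iff₀ (hε₂pos n)]
    have : P n = (ρs n) ^ γ * ε₂ n := by simp only [hP]; ring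
    linarith [this ▸ h]
  have hTop : Tendsto ρs atTop atTop := by
    have h2 := (tendsto_rpow_atTop (show 0 < γ⁻¹ by positivity)).comp hgTop
    refine h2.congr fun n => ?_
    exact Real.rpow_rpow_inv (hρspos n).le (ne_of_gt hγ0)
  -- step 2 : ratios tend to limits
  have hBm : Tendsto (fun n => Am n / P n) atTop (𝓝 (1 / (γ * ρm))) := by
    simp only [hAm, hP]
    exact shock_ratio_tendsto γ ρm ε₁ ε₂ ρs hγ0 hρm hε₂pos hρsm hd1 hε₁ hTop
  have hBp : Tendsto (fun n => Ap n / P n) atTop (𝓝 (1 / (γ * ρp))) := by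
    simp only [hAp, hP]
    exact shock_ratio_tendsto γ ρp ε₁ ε₂ ρs hγ0 hρp hε₂pos hρsp hd2 hε₁ hTop
  -- step 3 : formula for sqrt (P n)
  have hsP : ∀ n, Real.sqrt (P n) =
      (um - up) / (Real.sqrt (Am n / P n) + Real.sqrt (Ap n / P n)) := by
    intro n
    have hden : 0 < Real.sqrt (Am n / P n) + Real.sqrt (Ap n / P n) :=
      add_pos (Real.sqrt_pos.mpr (div_pos (hAmpos n) (hPpos n)))
        (Real.sqrt_pos.mpr (div_pos (hAppos n) (hPpos n)))
    rw [eq_div_iff (ne_of_gt hden)]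
    have e1 : Real.sqrt (P n) * Real.sqrt (Am n / P n) = Real.sqrt (Am n) := by
      rw [← Real.sqrt_mul (hPpos n).le]
      congr 1
      rw [mul_comm, div_mul_cancel₀ _ (ne_of_gt (hPpos n))]
    have e2 : Real.sqrt (P n) * Real.sqrt (Ap n / P n) = Real.sqrt (Ap n) := by
      rw [← Real.sqrt_mul (hPpos n).le]
      congr 1
      rw [mul_comm, div_mul_cancel₀ _ (ne_of_gt (hPpos n))]
    rw [mul_add, e1, e2]
    exact (key n).symm
  set s : ℝ := Real.sqrt (1 / (γ * ρm)) + Real.sqrt (1 / (γ * ρp)) with hs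
  have hspos : 0 < s := by
    have : 0 < Real.sqrt (1 / (γ * ρm)) := Real.sqrt_pos.mpr (by positivity)
    have h2 : 0 ≤ Real.sqrt (1 / (γ * ρp)) := Real.sqrt_nonneg _
    simp only [hs]; linarith
  have hsqrtP : Tendsto (fun n => Real.sqrt (P n)) atTop (𝓝 ((um - up) / s)) := by
    have hden : Tendsto (fun n => Real.sqrt (Am n / P n) + Real.sqrt (Ap n / P n)) atTop
        (𝓝 s) := hBm.sqrt.add hBp.sqrt
    have := (tendsto_const_nhds (x := um - up) (f := atTop)).div hden (ne_of_gt hspos)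
    exact this.congr fun n => (hsP n).symm
  have hPlim : Tendsto P atTop (𝓝 (((um - up) / s) ^ 2)) :=
    ((hsqrtP.pow 2).congr fun n => Real.sq_sqrt (hPpos n).le)
  -- step 4 : identify the limit
  have hfinal : ((um - up) / s) ^ 2 =
      γ * ρm * ρp * ((um - up) / (Real.sqrt ρm + Real.sqrt ρp)) ^ 2 := by
    have ha : Real.sqrt γ ^ 2 = γ := Real.sq_sqrt hγ0.le
    have hb : Real.sqrt ρm ^ 2 = ρm := Real.sq_sqrt hρm.le
    have hc : Real.sqrt ρp ^ 2 = ρp := Real.sq_sqrt hρp.le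
    have hapos : 0 < Real.sqrt γ := Real.sqrt_pos.mpr hγ0
    have hbpos : 0 < Real.sqrt ρm := Real.sqrt_pos.mpr hρm
    have hcpos : 0 < Real.sqrt ρp := Real.sqrt_pos.mpr hρp
    have e1 : Real.sqrt (1 / (γ * ρm)) = 1 / (Real.sqrt γ * Real.sqrt ρm) := by
      rw [one_div, Real.sqrt_inv, Real.sqrt_mul hγ0.le, one_div]
    have e2 : Real.sqrt (1 / (γ * ρp)) = 1 / (Real.sqrt γ * Real.sqrt ρp) := by
      rw [one_div, Real.sqrt_inv, Real.sqrt_mul hγ0.le, one_div]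
    have ha' : Real.sqrt γ ≠ 0 := ne_of_gt hapos
    have hb' : Real.sqrt ρm ≠ 0 := ne_of_gt hbpos
    have hc' : Real.sqrt ρp ≠ 0 := ne_of_gt hcpos
    have hsv : s = (Real.sqrt ρm + Real.sqrt ρp) /
        (Real.sqrt γ * Real.sqrt ρm * Real.sqrt ρp) := by
      simp only [hs, e1, e2]
      field_simp
      ring
    have hsq : (Real.sqrt γ * Real.sqrt ρm * Real.sqrt ρp) ^ 2 = γ * ρm * ρp := by
      rw [mul_pow, mul_pow, ha, hb, hc]
    rw [hsv, div_div_eq_mul_div, div_pow, mul_pow, hsq, div_pow]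
    ring
  rw [← hfinal]
  exact hPlim
end

section
/- (Lemma 5.3) Let γ > 1, ρ₋, ρ₊ > 0, u₋ > u₊ and set σ = (√ρ₋ u₋ + √ρ₊ u₊)/(√ρ₋ + √ρ₊). Let (ε₁ⁿ), (ε₂ⁿ) be positive sequences tending to 0 and, for each n, let ρ*ⁿ > max(ρ₋,ρ₊), u*ⁿ ∈ ℝ satisfy ρ₋ρ*ⁿ − ε₁ⁿ(ρ₋ + ρ*ⁿ) > 0, ρ₊ρ*ⁿ − ε₁ⁿ(ρ₊ + ρ*ⁿ) > 0, u*ⁿ − u₋ = −√( ε₂ⁿ(ρ*ⁿ − ρ₋)((ρ*ⁿ)^γ − ρ₋^γ) / (γ(ρ₋ρ*ⁿ − ε₁ⁿ(ρ₋ + ρ*ⁿ))) ), u₊ − u*ⁿ = −√( ε₂ⁿ(ρ*ⁿ − ρ₊)((ρ*ⁿ)^γ − ρ₊^γ) / (γ(ρ₊ρ*ⁿ − ε₁ⁿ(ρ₊ + ρ*ⁿ))) ), and define σ₁ⁿ = u*ⁿ + (ρ₋ − 2ε₁ⁿ)(u*ⁿ − u₋)/(ρ*ⁿ − ρ₋)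 and σ₂ⁿ = u*ⁿ + (ρ₊ − 2ε₁ⁿ)(u₊ − u*ⁿ)/(ρ₊ − ρ*ⁿ). Then u*ⁿ → σ, σ₁ⁿ → σ and σ₂ⁿ → σ as n → ∞. -/
open Filter Topology Real

set_option maxHeartbeats 1000000 in
/-- Lemma 5.3: the intermediate velocity and both shock
speeds of the two-shock Riemann solution converge to the delta-shock
speed σ as the flux-perturbation parameters vanish. -/
theorem shock_speeds_limit
    (γ ρm ρp um up σ : ℝ) (hγ : 1 < γ) (hρm : 0 < ρm) (hρp : 0 < ρp)
    (hu : up < um)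
    (hσ : σ = (Real.sqrt ρm * um + Real.sqrt ρp * up) /
      (Real.sqrt ρm + Real.sqrt ρp))
    (ε₁ ε₂ ρs us σ₁ σ₂ : ℕ → ℝ)
    (hε₁pos : ∀ n, 0 < ε₁ n) (hε₂pos : ∀ n, 0 < ε₂ n)
    (hε₁ : Filter.Tendsto ε₁ Filter.atTop (nhds 0))
    (hε₂ : Filter.Tendsto ε₂ Filter.atTop (nhds 0))
    (hρs : ∀ n, max ρm ρp < ρs n)
    (hd1 : ∀ n, 0 < ρm * ρs n - ε₁ n * (ρm + ρs n))
    (hd2 : ∀ n, 0 < ρp * ρs n - ε₁ n * (ρp + ρs n))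
    (hback : ∀ n, us n - um =
      -Real.sqrt (ε₂ n * (ρs n - ρm) * ((ρs n) ^ γ - ρm ^ γ) /
        (γ * (ρm * ρs n - ε₁ n * (ρm + ρs n)))))
    (hforw : ∀ n, up - us n =
      -Real.sqrt (ε₂ n * (ρs n - ρp) * ((ρs n) ^ γ - ρp ^ γ) /
        (γ * (ρp * ρs n - ε₁ n * (ρp + ρs n)))))
    (hσ₁ : ∀ n, σ₁ n = us n + (ρm - 2 * ε₁ n) * (us n - um) / (ρs n - ρm))
    (hσ₂ : ∀ n, σ₂ n = us n + (ρp - 2 * ε₁ n) * (up - us n) / (ρp - ρs n)) :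
    Filter.Tendsto us Filter.atTop (nhds σ) ∧
    Filter.Tendsto σ₁ Filter.atTop (nhds σ) ∧
    Filter.Tendsto σ₂ Filter.atTop (nhds σ) := by
  have hγ0 : (0:ℝ) < γ := lt_trans zero_lt_one hγ
  set c : ℝ := um - up with hcdef
  have hc : 0 < c := sub_pos.2 hu
  -- basic facts on ρs
  have hρsm : ∀ n, ρm < ρs n := fun n => lt_of_le_of_lt (le_max_left _ _) (hρs n)
  have hρsp : ∀ n, ρp < ρs n := fun n => lt_of_le_of_lt (le_max_right _ _) (hρs n)
  have hρspos : ∀ n, 0 < ρs n := fun n => lt_trans hρm (hρsm n)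
  set Am : ℕ → ℝ := fun n => ε₂ n * (ρs n - ρm) * ((ρs n) ^ γ - ρm ^ γ) /
        (γ * (ρm * ρs n - ε₁ n * (ρm + ρs n))) with hAm
  set Ap : ℕ → ℝ := fun n => ε₂ n * (ρs n - ρp) * ((ρs n) ^ γ - ρp ^ γ) /
        (γ * (ρp * ρs n - ε₁ n * (ρp + ρs n))) with hAp
  have hAmpos : ∀ n, 0 < Am n := by
    intro n
    apply div_pos
    · exact mul_pos (mul_pos (hε₂pos n) (sub_pos.2 (hρsm n)))
        (sub_pos.2 (Real.rpow_lt_rpow hρm.le (hρsm n) hγ0))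
    · exact mul_pos hγ0 (hd1 n)
  have hAppos : ∀ n, 0 < Ap n := by
    intro n
    apply div_pos
    · exact mul_pos (mul_pos (hε₂pos n) (sub_pos.2 (hρsp n)))
        (sub_pos.2 (Real.rpow_lt_rpow hρp.le (hρsp n) hγ0))
    · exact mul_pos hγ0 (hd2 n)
  set s : ℕ → ℝ := fun n => Real.sqrt (Am n) with hsdef
  set t : ℕ → ℝ := fun n => Real.sqrt (Ap n) with htdef
  have hspos : ∀ n, 0 < s n := fun n => Real.sqrt_pos.2 (hAmpos n)
  have htpos : ∀ n, 0 < t n := fun n => Real.sqrt_pos.2 (hAppos n)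
  have hs_eq : ∀ n, us n - um = -s n := fun n => hback n
  have ht_eq : ∀ n, up - us n = -t n := fun n => hforw n
  have hst : ∀ n, s n + t n = c := by
    intro n
    have := hs_eq n
    have := ht_eq n
    nlinarith [hs_eq n, ht_eq n]
  -- ρs tends to infinity
  have hρsInf : Tendsto ρs atTop atTop := by
    rw [tendsto_atTop]
    intro b
    set M : ℝ := max b (max ρm ρp + 1) with hMdef
    have hMpos : 0 < M := lt_of_lt_of_le (by positivity) (le_max_right _ _)
    set ρ₀ : ℝ := min ρm ρp with hρ₀
    have hρ₀pos : 0 < ρ₀ := lt_min hρm hρp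
    set δ : ℝ := ρ₀ ^ 2 / (2 * (ρm + ρp + M)) with hδdef
    have hδpos : 0 < δ := by positivity
    set K : ℝ := 2 * M * M ^ γ / (γ * ρ₀ ^ 2) with hKdef
    have hKpos : 0 < K := by
      have : (0:ℝ) < M ^ γ := Real.rpow_pos_of_pos hMpos γ
      positivity
    set η : ℝ := c ^ 2 / (16 * K) with hηdef
    have hηpos : 0 < η := by positivity
    have hev : ∀ᶠ n in atTop, ε₁ n < δ ∧ ε₂ n < η := by
      filter_upwards [hε₁.eventually (gt_mem_nhds hδpos),
        hε₂.eventually (gt_mem_nhds hηpos)] with n h1 h2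
      exact ⟨h1, h2⟩
    filter_upwards [hev] with n hn
    by_contra hcon
    push_neg at hcon
    have hρsM : ρs n ≤ M := by
      by_contra h
      push_neg at h
      exact absurd (le_of_lt (lt_of_le_of_lt (le_max_left _ _) h)) (not_le.2 hcon)
    -- bound Am n and Ap n by K * ε₂ n
    have hbound : ∀ ρ : ℝ, 0 < ρ → ρ₀ ≤ ρ → ρ ≤ ρm + ρp → ρ < ρs n →
        ε₂ n * (ρs n - ρ) * ((ρs n) ^ γ - ρ ^ γ) /
          (γ * (ρ * ρs n - ε₁ n * (ρ + ρs n))) ≤ K * ε₂ n := by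
      intro ρ hρ hρ₀ρ hρub hρρs
      have hden : ρ₀ ^ 2 / 2 ≤ ρ * ρs n - ε₁ n * (ρ + ρs n) := by
        have h1 : ε₁ n * (ρ + ρs n) ≤ δ * (ρm + ρp + M) := by
          apply mul_le_mul hn.1.le _ (by linarith [hρspos n]) hδpos.le
          nlinarith [hρsM, hρspos n]
        have h2 : δ * (ρm + ρp + M) = ρ₀ ^ 2 / 2 := by
          rw [hδdef]; field_simp
        have h3 : ρ₀ ^ 2 ≤ ρ * ρs n := by
          have : ρ₀ ≤ ρs n := le_trans hρ₀ρ hρρs.le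
          nlinarith
        nlinarith
      have hnum : ε₂ n * (ρs n - ρ) * ((ρs n) ^ γ - ρ ^ γ) ≤ ε₂ n * (M * M ^ γ) := by
        have h4 : ρs n - ρ ≤ M := by nlinarith [hρsM]
        have h5 : (ρs n) ^ γ - ρ ^ γ ≤ M ^ γ := by
          have := Real.rpow_le_rpow (hρspos n).le hρsM hγ0.le
          have := Real.rpow_pos_of_pos hρ γ
          nlinarith
        have h6 : 0 ≤ ρs n - ρ := by linarith
        have h7 : 0 ≤ (ρs n) ^ γ - ρ ^ γ :=
          (sub_pos.2 (Real.rpow_lt_rpow hρ.le hρρs hγ0)).le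
        calc ε₂ n * (ρs n - ρ) * ((ρs n) ^ γ - ρ ^ γ)
            ≤ ε₂ n * M * ((ρs n) ^ γ - ρ ^ γ) := by
              apply mul_le_mul_of_nonneg_right _ h7
              exact mul_le_mul_of_nonneg_left h4 (hε₂pos n).le
          _ ≤ ε₂ n * M * M ^ γ := by
              apply mul_le_mul_of_nonneg_left h5 (mul_nonneg (hε₂pos n).le hMpos.le)
          _ = ε₂ n * (M * M ^ γ) := by ring
      have hdenpos : 0 < γ * (ρ * ρs n - ε₁ n * (ρ + ρs n)) := by
        apply mul_pos hγ0; nlinarith [hden, hρ₀pos]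
      rw [div_le_iff₀ hdenpos]
      have : K * ε₂ n * (γ * (ρ₀ ^ 2 / 2)) = ε₂ n * (M * M ^ γ) := by
        rw [hKdef]; field_simp
      nlinarith [mul_le_mul_of_nonneg_left hden (mul_pos hKpos (hε₂pos n)).le,
        mul_pos hKpos (hε₂pos n), hγ0]
    have hAmle : Am n ≤ K * ε₂ n :=
      hbound ρm hρm (min_le_left _ _) (by linarith) (hρsm n)
    have hAple : Ap n ≤ K * ε₂ n :=
      hbound ρp hρp (min_le_right _ _) (by linarith) (hρsp n)
    have hKη : K * η = (c / 4) ^ 2 := by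
      rw [hηdef]; field_simp; ring
    have hsle : s n ≤ c / 4 := by
      have : s n ≤ Real.sqrt (K * η) := by
        apply Real.sqrt_le_sqrt
        calc Am n ≤ K * ε₂ n := hAmle
          _ ≤ K * η := by nlinarith [hn.2, hKpos]
      rwa [hKη, Real.sqrt_sq (by positivity)] at this
    have htle : t n ≤ c / 4 := by
      have : t n ≤ Real.sqrt (K * η) := by
        apply Real.sqrt_le_sqrt
        calc Ap n ≤ K * ε₂ n := hAple
          _ ≤ K * η := by nlinarith [hn.2, hKpos]
      rwa [hKη, Real.sqrt_sq (by positivity)] at this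
    have := hst n
    linarith
  -- auxiliary limits
  have hinv : Tendsto (fun n => (ρs n)⁻¹) atTop (nhds 0) :=
    tendsto_inv_atTop_zero.comp hρsInf
  have hρsγInf : Tendsto (fun n => (ρs n) ^ γ) atTop atTop :=
    (tendsto_rpow_atTop hγ0).comp hρsInf
  have hinvγ : Tendsto (fun n => ((ρs n) ^ γ)⁻¹) atTop (nhds 0) :=
    tendsto_inv_atTop_zero.comp hρsγInf
  -- ratio limit
  have hr : Tendsto (fun n => Ap n / Am n) atTop (nhds (ρm / ρp)) := by
    have heq : ∀ n, Ap n / Am n =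
        ((1 - ρp * (ρs n)⁻¹) * (1 - ρp ^ γ * ((ρs n) ^ γ)⁻¹) *
          (ρm - ε₁ n * (ρm * (ρs n)⁻¹ + 1))) /
        ((1 - ρm * (ρs n)⁻¹) * (1 - ρm ^ γ * ((ρs n) ^ γ)⁻¹) *
          (ρp - ε₁ n * (ρp * (ρs n)⁻¹ + 1))) := by
      intro n
      have hsne : ρs n ≠ 0 := (hρspos n).ne'
      have hsγne : (ρs n) ^ γ ≠ 0 := (Real.rpow_pos_of_pos (hρspos n) γ).ne'
      have h1 : ρs n - ρm ≠ 0 := (sub_pos.2 (hρsm n)).ne'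
      have h2 : (ρs n) ^ γ - ρm ^ γ ≠ 0 :=
        (sub_pos.2 (Real.rpow_lt_rpow hρm.le (hρsm n) hγ0)).ne'
      have h3 : ρm * ρs n - ε₁ n * (ρm + ρs n) ≠ 0 := (hd1 n).ne'
      have h1p : ρs n - ρp ≠ 0 := (sub_pos.2 (hρsp n)).ne'
      have h2p : (ρs n) ^ γ - ρp ^ γ ≠ 0 :=
        (sub_pos.2 (Real.rpow_lt_rpow hρp.le (hρsp n) hγ0)).ne'
      have h3p : ρp * ρs n - ε₁ n * (ρp + ρs n) ≠ 0 := (hd2 n).ne'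
      have h4 : γ ≠ 0 := hγ0.ne'
      have h5 : ε₂ n ≠ 0 := (hε₂pos n).ne'
      rw [hAm, hAp]
      field_simp
    rw [show (ρm / ρp : ℝ) = ((1 - ρp * 0) * (1 - ρp ^ γ * 0) * (ρm - 0 * (ρm * 0 + 1))) /
        ((1 - ρm * 0) * (1 - ρm ^ γ * 0) * (ρp - 0 * (ρp * 0 + 1))) by
      simp]
    apply Tendsto.congr (fun n => (heq n).symm)
    apply Tendsto.div
    · exact (((tendsto_const_nhds.sub (tendsto_const_nhds.mul hinv)).mul
        (tendsto_const_nhds.sub (tendsto_const_nhds.mul hinvγ))).mul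
        (tendsto_const_nhds.sub (hε₁.mul ((tendsto_const_nhds.mul hinv).add tendsto_const_nhds))))
    · exact (((tendsto_const_nhds.sub (tendsto_const_nhds.mul hinv)).mul
        (tendsto_const_nhds.sub (tendsto_const_nhds.mul hinvγ))).mul
        (tendsto_const_nhds.sub (hε₁.mul ((tendsto_const_nhds.mul hinv).add tendsto_const_nhds))))
    · simp only [mul_zero, sub_zero, zero_mul, zero_add, mul_one, one_mul]
      positivity
  -- limit of s
  have hsqrtρ : Real.sqrt (ρm / ρp) = Real.sqrt ρm / Real.sqrt ρp :=
    Real.sqrt_div hρm.le ρp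
  have hsm : 0 < Real.sqrt ρm := Real.sqrt_pos.2 hρm
  have hsp : 0 < Real.sqrt ρp := Real.sqrt_pos.2 hρp
  set L : ℝ := c / (1 + Real.sqrt (ρm / ρp)) with hLdef
  have hseq : ∀ n, s n = c / (1 + Real.sqrt (Ap n / Am n)) := by
    intro n
    have h1 : Real.sqrt (Ap n / Am n) = t n / s n := by
      rw [Real.sqrt_div (hAppos n).le]
    rw [h1]
    have h2 := hst n
    have h3 := (hspos n).ne'
    rw [one_add_div h3, div_div_eq_mul_div, h2]
    exact (mul_div_cancel_left₀ (s n) hc.ne').symm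
  have hsL : Tendsto s atTop (nhds L) := by
    apply Tendsto.congr (fun n => (hseq n).symm)
    apply Tendsto.div tendsto_const_nhds
    · exact tendsto_const_nhds.add
        ((Real.continuous_sqrt.tendsto _).comp hr)
    · have : 0 ≤ Real.sqrt (ρm / ρp) := Real.sqrt_nonneg _
      positivity
  -- identify the limit of us
  have hLσ : um - L = σ := by
    rw [hσ, hLdef, hsqrtρ, hcdef]
    have hden : Real.sqrt ρm + Real.sqrt ρp ≠ 0 := by positivity
    have hden2 : 1 + Real.sqrt ρm / Real.sqrt ρp ≠ 0 := by positivity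
    field_simp
    ring
  have husσ : Tendsto us atTop (nhds σ) := by
    have : Tendsto (fun n => um - s n) atTop (nhds (um - L)) :=
      tendsto_const_nhds.sub hsL
    rw [hLσ] at this
    apply this.congr
    intro n
    have := hs_eq n
    linarith
  refine ⟨husσ, ?_, ?_⟩
  · -- σ₁
    have h0 : Tendsto (fun n => (ρm - 2 * ε₁ n) * (-s n) * (ρs n - ρm)⁻¹)
        atTop (nhds ((ρm - 2 * 0) * (-L) * 0)) := by
      exact ((tendsto_const_nhds.sub (tendsto_const_nhds.mul hε₁)).mul hsL.neg).mul
        (tendsto_inv_atTop_zero.comp (tendsto_atTop_add_const_right _ _ hρsInf))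
    rw [mul_zero] at h0
    have := husσ.add h0
    rw [add_zero] at this
    apply this.congr
    intro n
    rw [hσ₁ n, hs_eq n]
    ring
  · -- σ₂
    have h0 : Tendsto (fun n => (ρp - 2 * ε₁ n) * (-t n) * (-(ρs n - ρp)⁻¹))
        atTop (nhds ((ρp - 2 * 0) * (-(c - L)) * (-0))) := by
      have htL : Tendsto t atTop (nhds (c - L)) := by
        apply Tendsto.congr (fun n => ?_) (tendsto_const_nhds.sub hsL)
        · linarith [hst n]
      exact ((tendsto_const_nhds.sub (tendsto_const_nhds.mul hε₁)).mul htL.neg).mul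
        (tendsto_inv_atTop_zero.comp (tendsto_atTop_add_const_right _ _ hρsInf)).neg
    rw [neg_zero, mul_zero] at h0
    have := husσ.add h0
    rw [add_zero] at this
    apply this.congr
    intro n
    rw [hσ₂ n, ht_eq n]
    have h1 : ρp - ρs n ≠ 0 := (sub_neg.2 (hρsp n)).ne
    have h2 : ρs n - ρp ≠ 0 := (sub_pos.2 (hρsp n)).ne'
    field_simp
    ring
end

section
/- (Lemma 5.4) Under the hypotheses of Lemma 5.3 (γ > 1, ρ₋, ρ₊ > 0, u₋ > u₊, positive sequences ε₁ⁿ, ε₂ⁿ → 0, intermediate states ρ*ⁿ > max(ρ₋,ρ₊), u*ⁿ satisfying the two shock-curve relations, and shock speeds σ₁ⁿ = u*ⁿ + (ρ₋ − 2ε₁ⁿ)(u*ⁿ − u₋)/(ρ*ⁿ − ρ₋), σ₂ⁿ = u*ⁿ + (ρ₊ − 2ε₁ⁿ)(u₊ − u*ⁿ)/(ρ₊ − ρ*ⁿ)), one has ρ*ⁿ(σ₂ⁿ − σ₁ⁿ) → σ(ρ₊ − ρ₋) − (ρ₊u₊ − ρ₋u₋) as n → ∞, where σ = (√ρ₋ u₋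 + √ρ₊ u₊)/(√ρ₋ + √ρ₊). -/
open Filter Real Topology

private lemma aux_ratio (x a b : ℝ) (hx : x ≠ 0) (hxb : x - b ≠ 0) :
    (x - a) / (x - b) = (1 - a * x⁻¹) / (1 - b * x⁻¹) := by
  have h : (1:ℝ) - b * x⁻¹ ≠ 0 := by
    rw [show (1:ℝ) - b * x⁻¹ = (x - b)/x by field_simp]
    exact div_ne_zero hxb hx
  field_simp

private lemma aux_ratio2 (x m p e : ℝ) (hx : x ≠ 0) (hden : m * x - e * (m + x) ≠ 0) :
    (p * x - e * (p + x)) / (m * x - e * (m + x)) =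
      (p - e * (p * x⁻¹ + 1)) / (m - e * (m * x⁻¹ + 1)) := by
  have h : m - e * (m * x⁻¹ + 1) ≠ 0 := by
    rw [show m - e * (m * x⁻¹ + 1) = (m * x - e * (m + x))/x by field_simp]
    exact div_ne_zero hden hx
  field_simp

private lemma aux3 (x a : ℝ) (hx : x ≠ 0) (h : x - a ≠ 0) :
    x * (x - a)⁻¹ = (1 - a * x⁻¹)⁻¹ := by
  rw [show (1:ℝ) - a * x⁻¹ = (x - a)/x from by field_simp, inv_div, div_eq_mul_inv]

set_option maxHeartbeats 2000000 in
/-- Lemma 5.4: the product of the intermediate density with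
the gap of the shock speeds converges to the weight derivative
σ[ρ] − [ρu] of the limiting delta shock. -/
theorem intermediate_mass_limit
    (γ ρm ρp um up σ : ℝ) (hγ : 1 < γ) (hρm : 0 < ρm) (hρp : 0 < ρp)
    (hu : up < um)
    (hσ : σ = (Real.sqrt ρm * um + Real.sqrt ρp * up) /
      (Real.sqrt ρm + Real.sqrt ρp))
    (ε₁ ε₂ ρs us σ₁ σ₂ : ℕ → ℝ)
    (hε₁pos : ∀ n, 0 < ε₁ n) (hε₂pos : ∀ n, 0 < ε₂ n)
    (hε₁ : Filter.Tendsto ε₁ Filter.atTop (nhds 0))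
    (hε₂ : Filter.Tendsto ε₂ Filter.atTop (nhds 0))
    (hρs : ∀ n, max ρm ρp < ρs n)
    (hd1 : ∀ n, 0 < ρm * ρs n - ε₁ n * (ρm + ρs n))
    (hd2 : ∀ n, 0 < ρp * ρs n - ε₁ n * (ρp + ρs n))
    (hback : ∀ n, us n - um =
      -Real.sqrt (ε₂ n * (ρs n - ρm) * ((ρs n) ^ γ - ρm ^ γ) /
        (γ * (ρm * ρs n - ε₁ n * (ρm + ρs n)))))
    (hforw : ∀ n, up - us n =
      -Real.sqrt (ε₂ n * (ρs n - ρp) * ((ρs n) ^ γ - ρp ^ γ) /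
        (γ * (ρp * ρs n - ε₁ n * (ρp + ρs n)))))
    (hσ₁ : ∀ n, σ₁ n = us n + (ρm - 2 * ε₁ n) * (us n - um) / (ρs n - ρm))
    (hσ₂ : ∀ n, σ₂ n = us n + (ρp - 2 * ε₁ n) * (up - us n) / (ρp - ρs n)) :
    Filter.Tendsto (fun n => ρs n * (σ₂ n - σ₁ n)) Filter.atTop
      (nhds (σ * (ρp - ρm) - (ρp * up - ρm * um))) := by
  have hγ0 : (0:ℝ) < γ := lt_trans one_pos hγ
  have hsm : 0 < Real.sqrt ρm := Real.sqrt_pos.2 hρm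
  have hsp : 0 < Real.sqrt ρp := Real.sqrt_pos.2 hρp
  set sm := Real.sqrt ρm with hsm_def
  set sp := Real.sqrt ρp with hsp_def
  set c := um - up with hc
  have hc0 : 0 < c := sub_pos.2 hu
  have hρsm : ∀ n, ρm < ρs n := fun n => lt_of_le_of_lt (le_max_left _ _) (hρs n)
  have hρsp : ∀ n, ρp < ρs n := fun n => lt_of_le_of_lt (le_max_right _ _) (hρs n)
  have hρspos : ∀ n, 0 < ρs n := fun n => hρm.trans (hρsm n)
  set F : ℕ → ℝ := fun n => ε₂ n * (ρs n - ρm) * ((ρs n) ^ γ - ρm ^ γ) /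
        (γ * (ρm * ρs n - ε₁ n * (ρm + ρs n))) with hF_def
  set G : ℕ → ℝ := fun n => ε₂ n * (ρs n - ρp) * ((ρs n) ^ γ - ρp ^ γ) /
        (γ * (ρp * ρs n - ε₁ n * (ρp + ρs n))) with hG_def
  have hrm : ∀ n, ρm ^ γ < (ρs n) ^ γ := fun n =>
    Real.rpow_lt_rpow hρm.le (hρsm n) hγ0
  have hrp : ∀ n, ρp ^ γ < (ρs n) ^ γ := fun n =>
    Real.rpow_lt_rpow hρp.le (hρsp n) hγ0
  have hFpos : ∀ n, 0 < F n := by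
    intro n
    apply div_pos
    · exact mul_pos (mul_pos (hε₂pos n) (by linarith [hρsm n])) (by linarith [hrm n])
    · exact mul_pos hγ0 (hd1 n)
  have hGpos : ∀ n, 0 < G n := by
    intro n
    apply div_pos
    · exact mul_pos (mul_pos (hε₂pos n) (by linarith [hρsp n])) (by linarith [hrp n])
    · exact mul_pos hγ0 (hd2 n)
  set A : ℕ → ℝ := fun n => um - us n with hA_def
  set B : ℕ → ℝ := fun n => us n - up with hB_def
  have hA : ∀ n, A n = Real.sqrt (F n) := by
    intro n; have := hback n; simp only [hA_def, hF_def]; linarith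
  have hB : ∀ n, B n = Real.sqrt (G n) := by
    intro n; have := hforw n; simp only [hB_def, hG_def]; linarith
  have hApos : ∀ n, 0 < A n := fun n => (hA n) ▸ Real.sqrt_pos.2 (hFpos n)
  have hBpos : ∀ n, 0 < B n := fun n => (hB n) ▸ Real.sqrt_pos.2 (hGpos n)
  have hAB : ∀ n, A n + B n = c := fun n => by simp only [hA_def, hB_def, hc]; ring
  have hA2 : ∀ n, A n ^ 2 = F n := fun n => by rw [hA n]; exact Real.sq_sqrt (hFpos n).le
  have hB2 : ∀ n, B n ^ 2 = G n := fun n => by rw [hB n]; exact Real.sq_sqrt (hGpos n).le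
  -- Step 2 : ρs → ∞
  have hρstop : Tendsto ρs atTop atTop := by
    rw [tendsto_atTop]
    intro M
    set M' : ℝ := max M (max ρm ρp) + 1 with hM'
    have hmle : ρm ≤ max M (max ρm ρp) := le_trans (le_max_left _ _) (le_max_right _ _)
    have hple : ρp ≤ max M (max ρm ρp) := le_trans (le_max_right _ _) (le_max_right _ _)
    have hM'pos : 0 < M' := by linarith
    have hM'M : M ≤ M' := by have := le_max_left M (max ρm ρp); linarith
    have hM'm : ρm < M' := by linarith
    have hM'p : ρp < M' := by linarith
    set C : ℝ := max (2 * (M' * M' ^ γ) / (γ * (ρm * ρm)))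
        (2 * (M' * M' ^ γ) / (γ * (ρp * ρp))) with hC
    have hM'γpos : 0 < M' ^ γ := Real.rpow_pos_of_pos hM'pos γ
    have hCpos : 0 < C := lt_of_lt_of_le
      (div_pos (mul_pos two_pos (mul_pos hM'pos hM'γpos)) (mul_pos hγ0 (mul_pos hρm hρm)))
      (le_max_left _ _)
    have h1 : ∀ᶠ n in atTop, ε₁ n < ρm * ρm / (2 * (ρm + M')) :=
      hε₁.eventually (eventually_lt_nhds (div_pos (mul_pos hρm hρm) (by linarith)))
    have h2 : ∀ᶠ n in atTop, ε₁ n < ρp * ρp / (2 * (ρp + M')) :=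
      hε₁.eventually (eventually_lt_nhds (div_pos (mul_pos hρp hρp) (by linarith)))
    have h3 : ∀ᶠ n in atTop, ε₂ n < c ^ 2 / (4 * C) :=
      hε₂.eventually (eventually_lt_nhds (div_pos (pow_pos hc0 2) (by linarith)))
    filter_upwards [h1, h2, h3] with n h1n h2n h3n
    by_contra hcon
    push_neg at hcon
    have hlt : ρs n < M' := lt_of_lt_of_le hcon hM'M
    have hx : (ρs n) ^ γ ≤ M' ^ γ := Real.rpow_le_rpow (hρspos n).le hlt.le hγ0.le
    have hFb : F n ≤ ε₂ n * C := by
      have hnum : ε₂ n * (ρs n - ρm) * ((ρs n) ^ γ - ρm ^ γ) ≤ ε₂ n * (M' * M' ^ γ) := by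
        have h02 : 0 ≤ (ρs n) ^ γ - ρm ^ γ := by linarith [hrm n]
        have hb1 : ρs n - ρm ≤ M' := by linarith
        have hb2 : (ρs n) ^ γ - ρm ^ γ ≤ M' ^ γ := by
          have := Real.rpow_pos_of_pos hρm γ; linarith
        calc ε₂ n * (ρs n - ρm) * ((ρs n) ^ γ - ρm ^ γ)
            ≤ ε₂ n * M' * M' ^ γ :=
              mul_le_mul (mul_le_mul_of_nonneg_left hb1 (hε₂pos n).le) hb2 h02 (mul_nonneg (hε₂pos n).le hM'pos.le)
          _ = ε₂ n * (M' * M' ^ γ) := by ring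
      have hden : γ * (ρm * ρm) / 2 ≤ γ * (ρm * ρs n - ε₁ n * (ρm + ρs n)) := by
        have hb : ε₁ n * (ρm + ρs n) ≤ ρm * ρm / 2 := by
          have hpos : (0:ℝ) < 2 * (ρm + M') := by linarith
          have h4 := (lt_div_iff₀ hpos).1 h1n
          have hmono : ε₁ n * (ρm + ρs n) ≤ ε₁ n * (ρm + M') :=
            mul_le_mul_of_nonneg_left (by linarith) (hε₁pos n).le
          nlinarith
        have hmm : ρm * ρm ≤ ρm * ρs n := mul_le_mul_of_nonneg_left (hρsm n).le hρm.le
        have hin : ρm * ρm / 2 ≤ ρm * ρs n - ε₁ n * (ρm + ρs n) := by linarith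
        nlinarith [hγ0, hin]
      calc F n ≤ ε₂ n * (M' * M' ^ γ) / (γ * (ρm * ρm) / 2) :=
            div_le_div₀ (mul_nonneg (hε₂pos n).le (mul_pos hM'pos hM'γpos).le) hnum
              (div_pos (mul_pos hγ0 (mul_pos hρm hρm)) two_pos) hden
        _ = ε₂ n * (2 * (M' * M' ^ γ) / (γ * (ρm * ρm))) := by
            field_simp [hγ0.ne', hρm.ne']
        _ ≤ ε₂ n * C := mul_le_mul_of_nonneg_left (le_max_left _ _) (hε₂pos n).le
    have hGb : G n ≤ ε₂ n * C := by
      have hnum : ε₂ n * (ρs n - ρp) * ((ρs n) ^ γ - ρp ^ γ) ≤ ε₂ n * (M' * M' ^ γ) := by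
        have h02 : 0 ≤ (ρs n) ^ γ - ρp ^ γ := by linarith [hrp n]
        have hb1 : ρs n - ρp ≤ M' := by linarith
        have hb2 : (ρs n) ^ γ - ρp ^ γ ≤ M' ^ γ := by
          have := Real.rpow_pos_of_pos hρp γ; linarith
        calc ε₂ n * (ρs n - ρp) * ((ρs n) ^ γ - ρp ^ γ)
            ≤ ε₂ n * M' * M' ^ γ :=
              mul_le_mul (mul_le_mul_of_nonneg_left hb1 (hε₂pos n).le) hb2 h02 (mul_nonneg (hε₂pos n).le hM'pos.le)
          _ = ε₂ n * (M' * M' ^ γ) := by ring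
      have hden : γ * (ρp * ρp) / 2 ≤ γ * (ρp * ρs n - ε₁ n * (ρp + ρs n)) := by
        have hb : ε₁ n * (ρp + ρs n) ≤ ρp * ρp / 2 := by
          have hpos : (0:ℝ) < 2 * (ρp + M') := by linarith
          have h4 := (lt_div_iff₀ hpos).1 h2n
          have hmono : ε₁ n * (ρp + ρs n) ≤ ε₁ n * (ρp + M') :=
            mul_le_mul_of_nonneg_left (by linarith) (hε₁pos n).le
          nlinarith
        have hmm : ρp * ρp ≤ ρp * ρs n := mul_le_mul_of_nonneg_left (hρsp n).le hρp.le
        have hin : ρp * ρp / 2 ≤ ρp * ρs n - ε₁ n * (ρp + ρs n) := by linarith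
        nlinarith [hγ0, hin]
      calc G n ≤ ε₂ n * (M' * M' ^ γ) / (γ * (ρp * ρp) / 2) :=
            div_le_div₀ (mul_nonneg (hε₂pos n).le (mul_pos hM'pos hM'γpos).le) hnum
              (div_pos (mul_pos hγ0 (mul_pos hρp hρp)) two_pos) hden
        _ = ε₂ n * (2 * (M' * M' ^ γ) / (γ * (ρp * ρp))) := by
            field_simp [hγ0.ne', hρp.ne']
        _ ≤ ε₂ n * C := mul_le_mul_of_nonneg_left (le_max_right _ _) (hε₂pos n).le
    have hε₂C : ε₂ n * C < c ^ 2 / 4 := by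
      calc ε₂ n * C < c ^ 2 / (4 * C) * C := mul_lt_mul_of_pos_right h3n hCpos
        _ = c ^ 2 / 4 := by field_simp [hCpos.ne']
    rcases le_or_gt (c / 2) (A n) with hcase | hcase
    · have h5 : c ^ 2 / 4 ≤ A n ^ 2 := by nlinarith
      rw [hA2 n] at h5
      linarith
    · have hBge : c / 2 ≤ B n := by have := hAB n; linarith
      have h5 : c ^ 2 / 4 ≤ B n ^ 2 := by nlinarith
      rw [hB2 n] at h5
      linarith
  -- Step 3 : limits
  have hinv : Tendsto (fun n => (ρs n)⁻¹) atTop (nhds 0) :=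
    tendsto_inv_atTop_zero.comp hρstop
  have hrpow_top : Tendsto (fun n => (ρs n) ^ γ) atTop atTop :=
    (tendsto_rpow_atTop hγ0).comp hρstop
  have hinvγ : Tendsto (fun n => ((ρs n) ^ γ)⁻¹) atTop (nhds 0) :=
    tendsto_inv_atTop_zero.comp hrpow_top
  have hρsne : ∀ n, ρs n ≠ 0 := fun n => (hρspos n).ne'
  have hργne : ∀ n, (ρs n) ^ γ ≠ 0 := fun n => (Real.rpow_pos_of_pos (hρspos n) γ).ne'
  have hsubp : ∀ n, ρs n - ρp ≠ 0 := fun n => by have := hρsp n; intro h; linarith [sub_eq_zero.1 h]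
  have hsubm : ∀ n, ρs n - ρm ≠ 0 := fun n => by have := hρsm n; intro h; linarith [sub_eq_zero.1 h]
  have hsubγp : ∀ n, (ρs n) ^ γ - ρp ^ γ ≠ 0 := fun n => by
    have := hrp n; intro h; linarith [sub_eq_zero.1 h]
  have hf1 : Tendsto (fun n => (ρs n - ρm) / (ρs n - ρp)) atTop (nhds 1) := by
    have hnum : Tendsto (fun n => 1 - ρm * (ρs n)⁻¹) atTop (nhds 1) := by
      simpa using tendsto_const_nhds.sub (hinv.const_mul ρm)
    have hden : Tendsto (fun n => 1 - ρp * (ρs n)⁻¹) atTop (nhds 1) := by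
      simpa using tendsto_const_nhds.sub (hinv.const_mul ρp)
    have h := hnum.div hden one_ne_zero
    simp only [div_one] at h
    exact h.congr fun n => (aux_ratio _ _ _ (hρsne n) (hsubp n)).symm
  have hf2 : Tendsto (fun n => ((ρs n) ^ γ - ρm ^ γ) / ((ρs n) ^ γ - ρp ^ γ)) atTop (nhds 1) := by
    have hnum : Tendsto (fun n => 1 - ρm ^ γ * ((ρs n) ^ γ)⁻¹) atTop (nhds 1) := by
      simpa using tendsto_const_nhds.sub (hinvγ.const_mul (ρm ^ γ))
    have hden : Tendsto (fun n => 1 - ρp ^ γ * ((ρs n) ^ γ)⁻¹) atTop (nhds 1) := by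
      simpa using tendsto_const_nhds.sub (hinvγ.const_mul (ρp ^ γ))
    have h := hnum.div hden one_ne_zero
    simp only [div_one] at h
    exact h.congr fun n => (aux_ratio _ _ _ (hργne n) (hsubγp n)).symm
  have hf3 : Tendsto (fun n => (ρp * ρs n - ε₁ n * (ρp + ρs n)) /
      (ρm * ρs n - ε₁ n * (ρm + ρs n))) atTop (nhds (ρp / ρm)) := by
    have h0p : Tendsto (fun n => ε₁ n * (ρp * (ρs n)⁻¹ + 1)) atTop (nhds 0) := by
      have h00 : Tendsto (fun n => ρp * (ρs n)⁻¹ + 1) atTop (nhds (ρp * 0 + 1)) :=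
        (hinv.const_mul ρp).add tendsto_const_nhds
      simpa using hε₁.mul h00
    have h0m : Tendsto (fun n => ε₁ n * (ρm * (ρs n)⁻¹ + 1)) atTop (nhds 0) := by
      have h00 : Tendsto (fun n => ρm * (ρs n)⁻¹ + 1) atTop (nhds (ρm * 0 + 1)) :=
        (hinv.const_mul ρm).add tendsto_const_nhds
      simpa using hε₁.mul h00
    have hnum : Tendsto (fun n => ρp - ε₁ n * (ρp * (ρs n)⁻¹ + 1)) atTop (nhds ρp) := by
      have : Tendsto (fun n => ρp - ε₁ n * (ρp * (ρs n)⁻¹ + 1)) atTop (nhds (ρp - 0)) :=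
        tendsto_const_nhds.sub h0p
      simpa using this
    have hden : Tendsto (fun n => ρm - ε₁ n * (ρm * (ρs n)⁻¹ + 1)) atTop (nhds ρm) := by
      have : Tendsto (fun n => ρm - ε₁ n * (ρm * (ρs n)⁻¹ + 1)) atTop (nhds (ρm - 0)) :=
        tendsto_const_nhds.sub h0m
      simpa using this
    have h := hnum.div hden hρm.ne'
    exact h.congr fun n => (aux_ratio2 _ _ _ _ (hρsne n) (hd1 n).ne').symm
  have hFG : Tendsto (fun n => F n / G n) atTop (nhds (ρp / ρm)) := by
    have hprod := (hf1.mul hf2).mul hf3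
    rw [show (1:ℝ) * 1 * (ρp / ρm) = ρp / ρm by ring] at hprod
    refine hprod.congr fun n => ?_
    simp only [hF_def, hG_def]
    field_simp [hγ0.ne', (hε₂pos n).ne', (hd1 n).ne', (hd2 n).ne', hsubp n, hsubγp n]
  have htlim : Tendsto (fun n => A n / B n) atTop (nhds (sp / sm)) := by
    have h := hFG.sqrt
    rw [Real.sqrt_div hρp.le] at h
    refine h.congr fun n => ?_
    rw [hA n, hB n, Real.sqrt_div (hFpos n).le]
  have hsmsp : (0:ℝ) < sm + sp := by linarith
  have h1t : (1:ℝ) + sp / sm ≠ 0 := by positivity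
  have hAlim : Tendsto A atTop (nhds (c * sp / (sm + sp))) := by
    have h : Tendsto (fun n => c * (A n / B n) / (1 + A n / B n)) atTop
        (nhds (c * (sp / sm) / (1 + sp / sm))) :=
      (tendsto_const_nhds.mul htlim).div (tendsto_const_nhds.add htlim) h1t
    have hval : c * (sp / sm) / (1 + sp / sm) = c * sp / (sm + sp) := by
      have hne := hsmsp.ne'
      field_simp
    rw [hval] at h
    refine h.congr fun n => ?_
    have hBne := (hBpos n).ne'
    have hBA : B n + A n ≠ 0 := by
      have h2 := hAB n; intro h; linarith
    simp only [hA_def, hB_def, hc] at hBne hBA ⊢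
    field_simp
    ring
  have hBlim : Tendsto B atTop (nhds (c * sm / (sm + sp))) := by
    have h : Tendsto (fun n => c - A n) atTop (nhds (c - c * sp / (sm + sp))) :=
      tendsto_const_nhds.sub hAlim
    have hval : c - c * sp / (sm + sp) = c * sm / (sm + sp) := by
      have hne := hsmsp.ne'
      field_simp
      ring
    rw [hval] at h
    refine h.congr fun n => ?_
    have := hAB n; linarith
  -- ratio factors → 1
  have hq1 : Tendsto (fun n => ρs n * (ρs n - ρm)⁻¹) atTop (nhds 1) := by
    have h : Tendsto (fun n => (1 - ρm * (ρs n)⁻¹)⁻¹) atTop (nhds 1) := by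
      have h0 : Tendsto (fun n => 1 - ρm * (ρs n)⁻¹) atTop (nhds 1) := by
        simpa using tendsto_const_nhds.sub (hinv.const_mul ρm)
      simpa using h0.inv₀ one_ne_zero
    exact h.congr fun n => (aux3 _ _ (hρsne n) (hsubm n)).symm
  have hq2 : Tendsto (fun n => ρs n * (ρs n - ρp)⁻¹) atTop (nhds 1) := by
    have h : Tendsto (fun n => (1 - ρp * (ρs n)⁻¹)⁻¹) atTop (nhds 1) := by
      have h0 : Tendsto (fun n => 1 - ρp * (ρs n)⁻¹) atTop (nhds 1) := by
        simpa using tendsto_const_nhds.sub (hinv.const_mul ρp)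
      simpa using h0.inv₀ one_ne_zero
    exact h.congr fun n => (aux3 _ _ (hρsne n) (hsubp n)).symm
  have hε₁m : Tendsto (fun n => ρm - 2 * ε₁ n) atTop (nhds ρm) := by
    have h : Tendsto (fun n => ρm - 2 * ε₁ n) atTop (nhds (ρm - 2 * 0)) :=
      tendsto_const_nhds.sub (hε₁.const_mul 2)
    simpa using h
  have hε₁p : Tendsto (fun n => ρp - 2 * ε₁ n) atTop (nhds ρp) := by
    have h : Tendsto (fun n => ρp - 2 * ε₁ n) atTop (nhds (ρp - 2 * 0)) :=
      tendsto_const_nhds.sub (hε₁.const_mul 2)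
    simpa using h
  have hmain : ∀ n, ρs n * (σ₂ n - σ₁ n) =
      (ρm - 2 * ε₁ n) * A n * (ρs n * (ρs n - ρm)⁻¹) +
      (ρp - 2 * ε₁ n) * B n * (ρs n * (ρs n - ρp)⁻¹) := by
    intro n
    rw [hσ₁ n, hσ₂ n]
    have h1 := hsubm n
    have h2 := hsubp n
    have h3 : ρp - ρs n ≠ 0 := fun h => h2 (by linarith [sub_eq_zero.1 h])
    simp only [hA_def, hB_def]
    field_simp
    ring
  have hfinal : Tendsto (fun n =>
      (ρm - 2 * ε₁ n) * A n * (ρs n * (ρs n - ρm)⁻¹) +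
      (ρp - 2 * ε₁ n) * B n * (ρs n * (ρs n - ρp)⁻¹)) atTop
      (nhds (ρm * (c * sp / (sm + sp)) * 1 + ρp * (c * sm / (sm + sp)) * 1)) :=
    ((hε₁m.mul hAlim).mul hq1).add ((hε₁p.mul hBlim).mul hq2)
  have hvalue : σ * (ρp - ρm) - (ρp * up - ρm * um) =
      ρm * (c * sp / (sm + sp)) * 1 + ρp * (c * sm / (sm + sp)) * 1 := by
    have hm2 : ρm = sm ^ 2 := (Real.sq_sqrt hρm.le).symm
    have hp2 : ρp = sp ^ 2 := (Real.sq_sqrt hρp.le).symm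
    rw [hσ, hc, hm2, hp2]
    field_simp
    ring
  rw [hvalue]
  exact hfinal.congr fun n => (hmain n).symm
end

section
/- Let γ > 1 and ρ₀ > 0. Then ∫_{2ε₁}^{ρ₀} √(ε₂ s^{γ−2}/(s − 2ε₁)) ds → 0 as (ε₁,ε₂) → (0,0) with 0 < 2ε₁ < ρ₀ and ε₂ > 0. Consequently, for u₋ < u₊ and ρ₋, ρ₊ > 0, the fan boundaries u₁^{ε₁ε₂} = u₋ + ∫_{2ε₁}^{ρ₋} √(ε₂ s^{γ−2}/(s − 2ε₁)) ds and u₂^{ε₁ε₂} = u₊ − ∫_{2ε₁}^{ρ₊} √(ε₂ s^{γ−2}/(s − 2ε₁)) ds converge to u₋ and u₊ respectively as (ε₁,ε₂) → (0,0). -/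
open Real Filter MeasureTheory intervalIntegral

lemma sqrt_add_le' (x y : ℝ) (hx : 0 ≤ x) (hy : 0 ≤ y) :
    Real.sqrt (x + y) ≤ Real.sqrt x + Real.sqrt y := by
  have h : x + y ≤ (Real.sqrt x + Real.sqrt y) ^ 2 := by
    nlinarith [Real.sqrt_nonneg x, Real.sqrt_nonneg y, Real.sq_sqrt hx, Real.sq_sqrt hy]
  calc Real.sqrt (x + y) ≤ Real.sqrt ((Real.sqrt x + Real.sqrt y) ^ 2) := Real.sqrt_le_sqrt h
    _ = Real.sqrt x + Real.sqrt y := Real.sqrt_sq (by positivity)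

lemma key_limit (γ ρ₀ : ℝ) (hγ : 1 < γ) (hρ₀ : 0 < ρ₀) :
    Filter.Tendsto
      (fun p : ℝ × ℝ => ∫ s in (2 * p.1)..ρ₀,
        Real.sqrt (p.2 * s ^ (γ - 2) / (s - 2 * p.1)))
      (nhdsWithin (0, 0) {p : ℝ × ℝ | 0 < p.1 ∧ 2 * p.1 < ρ₀ ∧ 0 < p.2})
      (nhds 0) := by
  set C : ℝ := ρ₀ ^ ((γ - 2) / 2) * (ρ₀ ^ ((1 : ℝ) / 2) * 2) +
      ρ₀ ^ ((γ - 1) / 2) * (2 / (γ - 1)) with hC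
  have hup : Filter.Tendsto (fun p : ℝ × ℝ => Real.sqrt p.2 * C)
      (nhdsWithin (0, 0) {p : ℝ × ℝ | 0 < p.1 ∧ 2 * p.1 < ρ₀ ∧ 0 < p.2}) (nhds 0) := by
    have h1 : Filter.Tendsto (fun p : ℝ × ℝ => Real.sqrt p.2) (nhds ((0 : ℝ), (0 : ℝ)))
        (nhds 0) := by
      have := (Real.continuous_sqrt.comp continuous_snd).tendsto ((0 : ℝ), (0 : ℝ))
      simpa [Function.comp_def] using this
    simpa using (h1.mono_left nhdsWithin_le_nhds).mul_const C
  refine tendsto_of_tendsto_of_tendsto_of_le_of_le' tendsto_const_nhds hup ?_ ?_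
  · filter_upwards [self_mem_nhdsWithin] with p hp
    exact intervalIntegral.integral_nonneg (by linarith [hp.1, hp.2.1])
      (fun s _ => Real.sqrt_nonneg _)
  · filter_upwards [self_mem_nhdsWithin] with p hp
    obtain ⟨ha, hb, hε⟩ := hp
    set a := p.1 with hadef
    set ε := p.2 with hεdef
    have hab : 2 * a ≤ ρ₀ := hb.le
    have hrm1 : (-1 : ℝ) < -(1 / 2) := by norm_num
    have hrm2 : (-1 : ℝ) < (γ - 3) / 2 := by linarith
    set g : ℝ → ℝ := fun s =>
      Real.sqrt ε * (ρ₀ ^ ((γ - 2) / 2) * (s - 2 * a) ^ (-(1 / 2) : ℝ) +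
        (s - 2 * a) ^ ((γ - 3) / 2)) with hg
    have hint1 : IntervalIntegrable (fun s : ℝ => (s - 2 * a) ^ (-(1 / 2) : ℝ))
        volume (2 * a) ρ₀ := by
      have := (intervalIntegrable_rpow' (a := 0) (b := ρ₀ - 2 * a) hrm1).comp_sub_right (2 * a)
      simpa using this
    have hint2 : IntervalIntegrable (fun s : ℝ => (s - 2 * a) ^ ((γ - 3) / 2))
        volume (2 * a) ρ₀ := by
      have := (intervalIntegrable_rpow' (a := 0) (b := ρ₀ - 2 * a) hrm2).comp_sub_right (2 * a)
      simpa using this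
    have hgint : IntervalIntegrable g volume (2 * a) ρ₀ :=
      ((hint1.const_mul _).add hint2).const_mul _
    -- pointwise bound
    have hbound : ∀ s ∈ Set.Ioc (2 * a) ρ₀,
        Real.sqrt (ε * s ^ (γ - 2) / (s - 2 * a)) ≤ g s := by
      intro s hs
      have ht0 : 0 < s - 2 * a := by linarith [hs.1]
      have hs0 : 0 < s := by linarith [hs.1, ha]
      have hts : s - 2 * a ≤ s := by linarith
      have hsr : s ^ (γ - 2) ≤ ρ₀ ^ (γ - 2) + (s - 2 * a) ^ (γ - 2) := by
        rcases le_or_gt 2 γ with h2 | h2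
        · have h3 : s ^ (γ - 2) ≤ ρ₀ ^ (γ - 2) :=
            Real.rpow_le_rpow hs0.le hs.2 (by linarith)
          have h4 := Real.rpow_pos_of_pos ht0 (γ - 2)
          linarith
        · have h3 : s ^ (γ - 2) ≤ (s - 2 * a) ^ (γ - 2) :=
            Real.rpow_le_rpow_of_nonpos ht0 hts (by linarith)
          have h4 := Real.rpow_pos_of_pos hρ₀ (γ - 2)
          linarith
      have e0 : Real.sqrt (ε * s ^ (γ - 2) / (s - 2 * a))
          = Real.sqrt ε * Real.sqrt (s ^ (γ - 2) / (s - 2 * a)) := by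
        rw [mul_div_assoc, Real.sqrt_mul hε.le]
      have e1 : Real.sqrt (ρ₀ ^ (γ - 2) / (s - 2 * a))
          = ρ₀ ^ ((γ - 2) / 2) * (s - 2 * a) ^ (-(1 / 2) : ℝ) := by
        rw [Real.sqrt_div (Real.rpow_nonneg hρ₀.le _), Real.sqrt_eq_rpow,
          Real.sqrt_eq_rpow, ← Real.rpow_mul hρ₀.le, div_eq_mul_inv,
          ← Real.rpow_neg ht0.le]
        rw [show (γ - 2) * (1 / 2) = (γ - 2) / 2 by ring]
      have e2 : Real.sqrt ((s - 2 * a) ^ (γ - 2) / (s - 2 * a))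
          = (s - 2 * a) ^ ((γ - 3) / 2) := by
        have h5 : (s - 2 * a) ^ (γ - 2) / (s - 2 * a) = (s - 2 * a) ^ (γ - 3) := by
          have h6 := Real.rpow_add ht0 (γ - 3) 1
          rw [Real.rpow_one] at h6
          rw [div_eq_iff ht0.ne', ← h6, show γ - 3 + 1 = γ - 2 by ring]
        rw [h5, Real.sqrt_eq_rpow, ← Real.rpow_mul ht0.le]
        rw [show (γ - 3) * (1 / 2) = (γ - 3) / 2 by ring]
      rw [e0, hg]
      refine mul_le_mul_of_nonneg_left ?_ (Real.sqrt_nonneg ε)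
      calc Real.sqrt (s ^ (γ - 2) / (s - 2 * a))
          ≤ Real.sqrt ((ρ₀ ^ (γ - 2) + (s - 2 * a) ^ (γ - 2)) / (s - 2 * a)) := by
            apply Real.sqrt_le_sqrt
            gcongr
        _ = Real.sqrt (ρ₀ ^ (γ - 2) / (s - 2 * a)
              + (s - 2 * a) ^ (γ - 2) / (s - 2 * a)) := by rw [add_div]
        _ ≤ Real.sqrt (ρ₀ ^ (γ - 2) / (s - 2 * a))
              + Real.sqrt ((s - 2 * a) ^ (γ - 2) / (s - 2 * a)) :=
            sqrt_add_le' _ _ (by positivity) (by positivity)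
        _ = ρ₀ ^ ((γ - 2) / 2) * (s - 2 * a) ^ (-(1 / 2) : ℝ)
              + (s - 2 * a) ^ ((γ - 3) / 2) := by rw [e1, e2]
    -- integral inequality
    have hnorm : (∫ s in (2 * a)..ρ₀, Real.sqrt (ε * s ^ (γ - 2) / (s - 2 * a)))
        ≤ |∫ s in (2 * a)..ρ₀, g s| := by
      refine le_trans (le_abs_self _) ?_
      have hae : ∀ᵐ t ∂(volume.restrict (Set.uIoc (2 * a) ρ₀)),
          ‖Real.sqrt (ε * t ^ (γ - 2) / (t - 2 * a))‖ ≤ g t := by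
        filter_upwards [ae_restrict_mem measurableSet_uIoc] with t ht
        rw [Set.uIoc_of_le hab] at ht
        rw [Real.norm_eq_abs, abs_of_nonneg (Real.sqrt_nonneg _)]
        exact hbound t ht
      simpa [Real.norm_eq_abs] using
        intervalIntegral.norm_integral_le_abs_of_norm_le hae hgint
    -- compute the g-integral
    have hI1 : (∫ s in (2 * a)..ρ₀, (s - 2 * a) ^ (-(1 / 2) : ℝ))
        = (ρ₀ - 2 * a) ^ ((1 : ℝ) / 2) * 2 := by
      rw [intervalIntegral.integral_comp_sub_right (fun x => x ^ (-(1 / 2) : ℝ)) (2 * a),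
        sub_self, integral_rpow (Or.inl hrm1)]
      rw [show (-(1 / 2) : ℝ) + 1 = 1 / 2 by norm_num,
        Real.zero_rpow (by norm_num : (1 : ℝ) / 2 ≠ 0)]
      ring
    have hI2 : (∫ s in (2 * a)..ρ₀, (s - 2 * a) ^ ((γ - 3) / 2))
        = (ρ₀ - 2 * a) ^ ((γ - 1) / 2) * (2 / (γ - 1)) := by
      rw [intervalIntegral.integral_comp_sub_right (fun x => x ^ ((γ - 3) / 2)) (2 * a),
        sub_self, integral_rpow (Or.inl hrm2)]
      rw [show (γ - 3) / 2 + 1 = (γ - 1) / 2 by ring,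
        Real.zero_rpow (ne_of_gt (by linarith) : (γ - 1) / 2 ≠ 0)]
      field_simp
      ring
    have hIg : (∫ s in (2 * a)..ρ₀, g s)
        = Real.sqrt ε * (ρ₀ ^ ((γ - 2) / 2) * ((ρ₀ - 2 * a) ^ ((1 : ℝ) / 2) * 2)
          + (ρ₀ - 2 * a) ^ ((γ - 1) / 2) * (2 / (γ - 1))) := by
      rw [hg]
      rw [intervalIntegral.integral_const_mul,
        intervalIntegral.integral_add (hint1.const_mul _) hint2,
        intervalIntegral.integral_const_mul, hI1, hI2]
    have hfinal : |∫ s in (2 * a)..ρ₀, g s| ≤ Real.sqrt ε * C := by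
      have hnn : (0 : ℝ) ≤ Real.sqrt ε *
          (ρ₀ ^ ((γ - 2) / 2) * ((ρ₀ - 2 * a) ^ ((1 : ℝ) / 2) * 2)
            + (ρ₀ - 2 * a) ^ ((γ - 1) / 2) * (2 / (γ - 1))) := by
        have h1 : (0 : ℝ) ≤ ρ₀ - 2 * a := by linarith
        have h2 : (0 : ℝ) ≤ 2 / (γ - 1) := le_of_lt (div_pos two_pos (by linarith))
        refine mul_nonneg (Real.sqrt_nonneg _) (add_nonneg ?_ ?_)
        · exact mul_nonneg (Real.rpow_nonneg hρ₀.le _)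
            (mul_nonneg (Real.rpow_nonneg h1 _) (by norm_num))
        · exact mul_nonneg (Real.rpow_nonneg h1 _) h2
      rw [hIg, abs_of_nonneg hnn]
      have hsub : ρ₀ - 2 * a ≤ ρ₀ := by linarith
      have hsub0 : (0 : ℝ) ≤ ρ₀ - 2 * a := by linarith
      have b1 : (ρ₀ - 2 * a) ^ ((1 : ℝ) / 2) ≤ ρ₀ ^ ((1 : ℝ) / 2) :=
        Real.rpow_le_rpow hsub0 hsub (by norm_num)
      have b2 : (ρ₀ - 2 * a) ^ ((γ - 1) / 2) ≤ ρ₀ ^ ((γ - 1) / 2) :=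
        Real.rpow_le_rpow hsub0 hsub (by linarith)
      rw [hC]
      have hp1 : (0 : ℝ) ≤ ρ₀ ^ ((γ - 2) / 2) := (Real.rpow_pos_of_pos hρ₀ _).le
      have hγ1 : (0 : ℝ) < 2 / (γ - 1) := by apply div_pos <;> linarith
      refine mul_le_mul_of_nonneg_left ?_ (Real.sqrt_nonneg ε)
      gcongr
    exact le_trans hnorm hfinal

/-- ∫_{2ε₁}^{ρ₀} √(ε₂ s^{γ−2}/(s−2ε₁)) ds → 0 as
(ε₁,ε₂) → (0,0) through admissible parameters; consequently the fan
boundaries u₁^{ε₁ε₂}, u₂^{ε₁ε₂} converge to u₋, u₊ respectively. -/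
theorem fan_boundaries_limit
    (γ ρ₀ : ℝ) (hγ : 1 < γ) (hρ₀ : 0 < ρ₀) :
    Filter.Tendsto
      (fun p : ℝ × ℝ => ∫ s in (2 * p.1)..ρ₀,
        Real.sqrt (p.2 * s ^ (γ - 2) / (s - 2 * p.1)))
      (nhdsWithin (0, 0) {p : ℝ × ℝ | 0 < p.1 ∧ 2 * p.1 < ρ₀ ∧ 0 < p.2})
      (nhds 0) ∧
    ∀ um up ρm ρp : ℝ, um < up → 0 < ρm → 0 < ρp →
      Filter.Tendsto
        (fun p : ℝ × ℝ => um + ∫ s in (2 * p.1)..ρm,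
          Real.sqrt (p.2 * s ^ (γ - 2) / (s - 2 * p.1)))
        (nhdsWithin (0, 0) {p : ℝ × ℝ | 0 < p.1 ∧ 2 * p.1 < ρm ∧ 0 < p.2})
        (nhds um) ∧
      Filter.Tendsto
        (fun p : ℝ × ℝ => up - ∫ s in (2 * p.1)..ρp,
          Real.sqrt (p.2 * s ^ (γ - 2) / (s - 2 * p.1)))
        (nhdsWithin (0, 0) {p : ℝ × ℝ | 0 < p.1 ∧ 2 * p.1 < ρp ∧ 0 < p.2})
        (nhds up) := by
  refine ⟨key_limit γ ρ₀ hγ hρ₀, fun um up ρm ρp _ hm hp => ⟨?_, ?_⟩⟩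
  · simpa using (tendsto_const_nhds (x := um)).add (key_limit γ ρm hγ hm)
  · simpa using (tendsto_const_nhds (x := up)).sub (key_limit γ ρp hγ hp)
end

section
/- Let γ > 1, ρ₋, ρ₊ > 0 and u₋ < u₊. Then there exists ε₀ > 0 such that for all ε₁, ε₂ with 0 < ε₁ < ε₀, 0 < ε₂ < ε₀ and 2ε₁ < min(ρ₋,ρ₊), one has u₋ + ∫_{2ε₁}^{ρ₋} √(ε₂ s^{γ−2}/(s − 2ε₁)) ds < u₊ − ∫_{2ε₁}^{ρ₊} √(ε₂ s^{γ−2}/(s − 2ε₁)) ds; that is, for all sufficiently small flux-perturbation parameters, the two-rarefaction Riemann solution contains a nonempty constant-density intermediate state ρ = 2ε₁. -/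
open MeasureTheory intervalIntegral Real

private lemma sqrt_add_le'_s19 {A B : ℝ} (hA : 0 ≤ A) (hB : 0 ≤ B) :
    Real.sqrt (A + B) ≤ Real.sqrt A + Real.sqrt B := by
  rw [show Real.sqrt A + Real.sqrt B =
      Real.sqrt ((Real.sqrt A + Real.sqrt B) ^ 2) from
    (Real.sqrt_sq (by positivity)).symm]
  apply Real.sqrt_le_sqrt
  nlinarith [Real.sq_sqrt hA, Real.sq_sqrt hB, Real.sqrt_nonneg A, Real.sqrt_nonneg B]

/-- sqrt of rpow -/
private lemma sqrt_rpow' {x : ℝ} (hx : 0 ≤ x) (y : ℝ) :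
    Real.sqrt (x ^ y) = x ^ (y / 2) := by
  rw [Real.sqrt_eq_rpow, ← Real.rpow_mul hx]
  congr 1
  ring

/-- Key bound on a single rarefaction integral. -/
private lemma key_bound (γ R a ρ ε₂ : ℝ) (hγ : 1 < γ) (ha : 0 < a) (haρ : a < ρ)
    (hρR : ρ ≤ R) (hε : 0 < ε₂) :
    (∫ s in a..ρ, Real.sqrt (ε₂ * s ^ (γ - 2) / (s - a))) ≤
      Real.sqrt ε₂ * (2 / (γ - 1) * R ^ ((γ - 1) / 2)
        + 2 * R ^ ((γ - 2) / 2) * R ^ ((1 : ℝ) / 2)) := by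
  have hR : 0 < R := lt_of_lt_of_le (ha.trans haρ) hρR
  set f : ℝ → ℝ := fun s => Real.sqrt (ε₂ * s ^ (γ - 2) / (s - a)) with hf
  set g : ℝ → ℝ := fun s => Real.sqrt ε₂ *
      ((s - a) ^ ((γ - 3) / 2) + R ^ ((γ - 2) / 2) * (s - a) ^ (-(1 : ℝ) / 2)) with hg
  -- integrability of the pieces
  have h1 : IntervalIntegrable (fun s : ℝ => (s - a) ^ ((γ - 3) / 2)) volume a ρ := by
    have := (intervalIntegral.intervalIntegrable_rpow'
      (a := 0) (b := ρ - a) (r := (γ - 3) / 2) (by linarith)).comp_sub_right a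
    simpa using this
  have h2 : IntervalIntegrable (fun s : ℝ => (s - a) ^ (-(1 : ℝ) / 2)) volume a ρ := by
    have := (intervalIntegral.intervalIntegrable_rpow'
      (a := 0) (b := ρ - a) (r := -(1 : ℝ) / 2) (by norm_num)).comp_sub_right a
    simpa using this
  have hg_int : IntervalIntegrable g volume a ρ := by
    apply IntervalIntegrable.const_mul
    exact h1.add (h2.const_mul _)
  -- pointwise bound on the closed interval
  have hbound : ∀ s ∈ Set.Icc a ρ, f s ≤ g s := by
    intro s hs
    have hs0 : 0 < s := lt_of_lt_of_le ha hs.1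
    rcases eq_or_lt_of_le hs.1 with h | h
    · -- s = a : f s = 0
      have : f s = 0 := by
        simp [hf, ← h]
      rw [this, hg]
      have : (0:ℝ) ≤ (s - a) ^ ((γ - 3) / 2) + R ^ ((γ - 2) / 2) * (s - a) ^ (-(1 : ℝ) / 2) := by
        have h1 : (0:ℝ) ≤ (s - a) ^ ((γ - 3) / 2) := Real.rpow_nonneg (by linarith [hs.1]) _
        have h2 : (0:ℝ) ≤ (s - a) ^ (-(1 : ℝ) / 2) := Real.rpow_nonneg (by linarith [hs.1]) _
        positivity
      positivity
    · -- a < s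
      have ht : 0 < s - a := by linarith
      have hsR : s ≤ R := le_trans hs.2 hρR
      -- s ^ (γ-2) ≤ (s-a)^(γ-2) + R^(γ-2)
      have hnum : s ^ (γ - 2) ≤ (s - a) ^ (γ - 2) + R ^ (γ - 2) := by
        rcases le_or_gt 2 γ with hc | hc
        · have : s ^ (γ - 2) ≤ R ^ (γ - 2) :=
            Real.rpow_le_rpow hs0.le hsR (by linarith)
          have h0 : (0:ℝ) ≤ (s - a) ^ (γ - 2) := Real.rpow_nonneg ht.le _
          linarith
        · have : s ^ (γ - 2) ≤ (s - a) ^ (γ - 2) :=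
            Real.rpow_le_rpow_of_nonpos ht (by linarith) (by linarith)
          have h0 : (0:ℝ) ≤ R ^ (γ - 2) := Real.rpow_nonneg hR.le _
          linarith
      have hdiv : s ^ (γ - 2) / (s - a) ≤
          (s - a) ^ (γ - 3) + R ^ (γ - 2) * (s - a)⁻¹ := by
        have e1 : (s - a) ^ (γ - 3) = (s - a) ^ (γ - 2) / (s - a) := by
          have := Real.rpow_sub_one (x := s - a) ht.ne' (γ - 2)
          rw [show γ - 3 = γ - 2 - 1 by ring, this]
        rw [e1, show R ^ (γ - 2) * (s - a)⁻¹ = R ^ (γ - 2) / (s - a) by ring,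
          ← add_div]
        gcongr
      -- now take square roots
      have hfx : f s = Real.sqrt ε₂ * Real.sqrt (s ^ (γ - 2) / (s - a)) := by
        show Real.sqrt (ε₂ * s ^ (γ - 2) / (s - a)) = _
        rw [mul_div_assoc, Real.sqrt_mul hε.le]
      rw [hfx, hg]
      apply mul_le_mul_of_nonneg_left _ (Real.sqrt_nonneg _)
      calc Real.sqrt (s ^ (γ - 2) / (s - a))
          ≤ Real.sqrt ((s - a) ^ (γ - 3) + R ^ (γ - 2) * (s - a)⁻¹) :=
            Real.sqrt_le_sqrt hdiv
        _ ≤ Real.sqrt ((s - a) ^ (γ - 3)) + Real.sqrt (R ^ (γ - 2) * (s - a)⁻¹) := by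
            apply sqrt_add_le'_s19 (Real.rpow_nonneg ht.le _)
            have := Real.rpow_nonneg hR.le (γ - 2)
            positivity
        _ = (s - a) ^ ((γ - 3) / 2) + R ^ ((γ - 2) / 2) * (s - a) ^ (-(1 : ℝ) / 2) := by
            have hinv : Real.sqrt ((s - a)⁻¹) = (s - a) ^ (-(1 : ℝ) / 2) := by
              rw [show (s - a)⁻¹ = (s - a) ^ (-1 : ℝ) from (Real.rpow_neg_one _).symm,
                sqrt_rpow' ht.le]
            rw [sqrt_rpow' ht.le, Real.sqrt_mul (Real.rpow_nonneg hR.le _),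
              sqrt_rpow' hR.le, hinv]
  -- integrability of f
  have hf_meas : AEStronglyMeasurable f (volume.restrict (Set.uIoc a ρ)) := by
    apply Measurable.aestronglyMeasurable
    fun_prop
  have hf_int : IntervalIntegrable f volume a ρ := by
    apply hg_int.mono_fun' hf_meas
    rw [Filter.EventuallyLE, ae_restrict_iff' measurableSet_uIoc]
    apply Filter.Eventually.of_forall
    intro s hs
    rw [Set.uIoc_of_le haρ.le] at hs
    have hs' : s ∈ Set.Icc a ρ := ⟨hs.1.le, hs.2⟩
    simpa [hf, Real.sqrt_nonneg, abs_of_nonneg] using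
      (abs_of_nonneg (Real.sqrt_nonneg _)).le.trans (hbound s hs')
  -- compare the integrals
  have hmono := intervalIntegral.integral_mono_on haρ.le hf_int hg_int hbound
  refine hmono.trans ?_
  -- compute the integral of g
  rw [hg]
  rw [intervalIntegral.integral_const_mul]
  apply mul_le_mul_of_nonneg_left _ (Real.sqrt_nonneg _)
  rw [intervalIntegral.integral_add h1 (h2.const_mul _), intervalIntegral.integral_const_mul]
  have hI1 : (∫ s in a..ρ, (s - a) ^ ((γ - 3) / 2)) =
      (ρ - a) ^ ((γ - 3) / 2 + 1) / ((γ - 3) / 2 + 1) := by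
    rw [intervalIntegral.integral_comp_sub_right (fun s : ℝ => s ^ ((γ - 3) / 2)) a]
    rw [integral_rpow (Or.inl (by linarith))]
    rw [sub_self, Real.zero_rpow (by linarith)]
    ring
  have hI2 : (∫ s in a..ρ, (s - a) ^ (-(1 : ℝ) / 2)) =
      (ρ - a) ^ (-(1 : ℝ) / 2 + 1) / (-(1 : ℝ) / 2 + 1) := by
    rw [intervalIntegral.integral_comp_sub_right (fun s : ℝ => s ^ (-(1 : ℝ) / 2)) a]
    rw [integral_rpow (Or.inl (by norm_num))]
    rw [sub_self, Real.zero_rpow (by norm_num)]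
    ring
  rw [hI1, hI2]
  have ht : 0 < ρ - a := by linarith
  have htR : ρ - a ≤ R := by linarith
  have hγ1 : (0:ℝ) < γ - 1 := by linarith
  rw [show (γ - 3) / 2 + 1 = (γ - 1) / 2 by ring,
    show -(1 : ℝ) / 2 + 1 = (1 : ℝ) / 2 by norm_num]
  have hA : (ρ - a) ^ ((γ - 1) / 2) ≤ R ^ ((γ - 1) / 2) :=
    Real.rpow_le_rpow ht.le htR (by linarith)
  have hB : (ρ - a) ^ ((1 : ℝ) / 2) ≤ R ^ ((1 : ℝ) / 2) :=
    Real.rpow_le_rpow ht.le htR (by norm_num)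
  have hC : (0:ℝ) ≤ R ^ ((γ - 2) / 2) := Real.rpow_nonneg hR.le _
  have t1 : (ρ - a) ^ ((γ - 1) / 2) / ((γ - 1) / 2) ≤ 2 / (γ - 1) * R ^ ((γ - 1) / 2) := by
    rw [div_le_iff₀ (by linarith : (0:ℝ) < (γ - 1) / 2)]
    have he : 2 / (γ - 1) * R ^ ((γ - 1) / 2) * ((γ - 1) / 2) = R ^ ((γ - 1) / 2) := by
      field_simp
    rw [he]; exact hA
  have t2 : R ^ ((γ - 2) / 2) * ((ρ - a) ^ ((1 : ℝ) / 2) / ((1 : ℝ) / 2)) ≤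
      2 * R ^ ((γ - 2) / 2) * R ^ ((1 : ℝ) / 2) := by
    have he : (ρ - a) ^ ((1 : ℝ) / 2) / ((1 : ℝ) / 2) = 2 * (ρ - a) ^ ((1 : ℝ) / 2) := by
      ring
    rw [he]
    calc R ^ ((γ - 2) / 2) * (2 * (ρ - a) ^ ((1 : ℝ) / 2))
        ≤ R ^ ((γ - 2) / 2) * (2 * R ^ ((1 : ℝ) / 2)) := by
          apply mul_le_mul_of_nonneg_left _ hC
          linarith
      _ = 2 * R ^ ((γ - 2) / 2) * R ^ ((1 : ℝ) / 2) := by ring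
  linarith

/-- for all sufficiently small flux-perturbation parameters
ε₁, ε₂, the two-rarefaction Riemann solution contains a nonempty
constant-density intermediate state ρ = 2ε₁, i.e. u₁^{ε₁ε₂} < u₂^{ε₁ε₂}. -/
theorem constant_density_state_appears
    (γ ρm ρp um up : ℝ) (hγ : 1 < γ) (hρm : 0 < ρm) (hρp : 0 < ρp)
    (hu : um < up) :
    ∃ ε₀ > (0 : ℝ), ∀ ε₁ ε₂ : ℝ, 0 < ε₁ → ε₁ < ε₀ → 0 < ε₂ → ε₂ < ε₀ →
      2 * ε₁ < min ρm ρp →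
      um + (∫ s in (2 * ε₁)..ρm,
          Real.sqrt (ε₂ * s ^ (γ - 2) / (s - 2 * ε₁))) <
        up - ∫ s in (2 * ε₁)..ρp,
          Real.sqrt (ε₂ * s ^ (γ - 2) / (s - 2 * ε₁)) := by
  set R : ℝ := max ρm ρp with hR
  have hRpos : 0 < R := lt_max_of_lt_left hρm
  set K : ℝ := 2 / (γ - 1) * R ^ ((γ - 1) / 2)
      + 2 * R ^ ((γ - 2) / 2) * R ^ ((1 : ℝ) / 2) with hK
  have hKpos : 0 < K := by
    have h1 : (0:ℝ) < R ^ ((γ - 1) / 2) := Real.rpow_pos_of_pos hRpos _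
    have h2 : (0:ℝ) < R ^ ((γ - 2) / 2) := Real.rpow_pos_of_pos hRpos _
    have h3 : (0:ℝ) < R ^ ((1:ℝ) / 2) := Real.rpow_pos_of_pos hRpos _
    have t1 : (0:ℝ) < 2 / (γ - 1) * R ^ ((γ - 1) / 2) :=
      mul_pos (div_pos two_pos (by linarith)) h1
    have t2 : (0:ℝ) < 2 * R ^ ((γ - 2) / 2) * R ^ ((1:ℝ) / 2) :=
      mul_pos (mul_pos two_pos h2) h3
    rw [hK]; linarith
  have hdpos : (0:ℝ) < (up - um) / (2 * (K + 1)) :=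
    div_pos (by linarith) (by linarith)
  refine ⟨((up - um) / (2 * (K + 1))) ^ 2, pow_pos hdpos 2, ?_⟩
  intro ε₁ ε₂ hε₁ hε₁' hε₂ hε₂' hmin
  have hb1 : 2 * ε₁ < ρm := lt_of_lt_of_le hmin (min_le_left _ _)
  have hb2 : 2 * ε₁ < ρp := lt_of_lt_of_le hmin (min_le_right _ _)
  have key1 := key_bound γ R (2 * ε₁) ρm ε₂ hγ (by linarith) hb1 (le_max_left _ _) hε₂
  have key2 := key_bound γ R (2 * ε₁) ρp ε₂ hγ (by linarith) hb2 (le_max_right _ _) hε₂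
  have hsq : Real.sqrt ε₂ < (up - um) / (2 * (K + 1)) := by
    have := Real.sqrt_lt_sqrt hε₂.le hε₂'
    rwa [Real.sqrt_sq hdpos.le] at this
  have hKK : Real.sqrt ε₂ * K < (up - um) / 2 := by
    have h0 : 0 ≤ Real.sqrt ε₂ := Real.sqrt_nonneg _
    have h1 : Real.sqrt ε₂ * K ≤ Real.sqrt ε₂ * (K + 1) := by nlinarith
    have h2 : Real.sqrt ε₂ * (K + 1) < (up - um) / (2 * (K + 1)) * (K + 1) := by
      apply mul_lt_mul_of_pos_right hsq (by linarith)
    have h3 : (up - um) / (2 * (K + 1)) * (K + 1) = (up - um) / 2 := by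
      field_simp
    linarith
  linarith
end
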